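/- arXiv:1211.3003 — 4 statements merged into one kernel-verified Lean document; each statement's English description precedes it below -/
import Mathlib

section
/- Let ν be a symmetric probability measure on ℤ such that there is a constant C_1 with ν(n) ≤ C_1 ν(m) for all 0 ≤ m ≤ n. Let G be a countable group with a distinguished element s, and define the Dirichlet form E_{s,ν}(f,f) = (1/2) Σ_{x∈G, z∈ℤ} |f(xs^z) − f(x)|² ν(z) and the truncated second moment G_ν(m) = Σ_{|n|≤m} n² ν(n). Then there is a constant C_ν depending only on C_1 such that for any finitely supported function f on G and any y ∈ ℤ, Σ_{x∈G} |f(xs^y) − f(x)|² ≤ C_ν · (y² / G_ν(|y|)) · E_{s,ν}(f,f). -/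
/-- The Dirichlet form `E_{s,ν}(f,f) = (1/2) Σ_{x∈G, z∈ℤ} |f(xs^z) − f(x)|² ν(z)`. -/
noncomputable def dirichletForm {G : Type*} [Group G] (s : G) (ν : ℤ → ℝ) (f : G → ℝ) : ℝ :=
  (1 / 2) * ∑' p : G × ℤ, (f (p.1 * s ^ p.2) - f p.1) ^ 2 * ν p.2

/-- The truncated second moment `G_ν(m) = Σ_{|n| ≤ m} n² ν(n)`. -/
noncomputable def truncMoment (ν : ℤ → ℝ) (m : ℤ) : ℝ :=
  ∑' n : ℤ, if |n| ≤ m then (n : ℝ) ^ 2 * ν n else 0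

lemma sum_inv_sq_aux (n : ℕ) :
    ∑ k ∈ Finset.range n, (1:ℝ)/((k:ℝ)+1)^2 ≤ 2 - 2/((n:ℝ)+1) := by
  induction n with
  | zero => norm_num
  | succ n ih =>
    rw [Finset.sum_range_succ]
    have h1 : (0:ℝ) < (n:ℝ)+1 := by positivity
    have h2 : (0:ℝ) < (n:ℝ)+2 := by positivity
    have hstep : (1:ℝ)/((n:ℝ)+1)^2 ≤ 2/((n:ℝ)+1) - 2/((n:ℝ)+2) := by
      rw [div_sub_div _ _ (ne_of_gt h1) (ne_of_gt h2), div_le_div_iff₀ (by positivity) (by positivity)]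
      ring_nf
      nlinarith [sq_nonneg ((n:ℝ))]
    push_cast
    have e : 2/((n:ℝ)+1+1) = 2/((n:ℝ)+2) := by ring_nf
    linarith [e]

lemma sum_inv_sq_int (Y : ℕ) :
    ∑ k ∈ Finset.Icc (1:ℤ) (Y:ℤ), (1:ℝ)/((k:ℝ))^2 ≤ 2 := by
  have hmap : Finset.Icc (1:ℤ) (Y:ℤ)
      = Finset.map ⟨fun j : ℕ => (j:ℤ)+1, by intro a b h; simpa using h⟩ (Finset.range Y) := by
    ext n
    simp only [Finset.mem_Icc, Finset.mem_map, Finset.mem_range, Function.Embedding.coeFn_mk]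
    constructor
    · intro h; exact ⟨(n-1).toNat, by omega, by show (((n-1).toNat : ℕ) : ℤ) + 1 = n; omega⟩
    · rintro ⟨j, hj, rfl⟩; show 1 ≤ (j:ℤ) + 1 ∧ (j:ℤ) + 1 ≤ Y; omega
  rw [hmap, Finset.sum_map]
  have h1 : (0:ℝ) < (Y:ℝ)+1 := by positivity
  calc ∑ j ∈ Finset.range Y, (1:ℝ)/((((j:ℤ)+1 : ℤ)):ℝ)^2
      = ∑ j ∈ Finset.range Y, (1:ℝ)/((j:ℝ)+1)^2 := by
        apply Finset.sum_congr rfl; intro j _; push_cast; ring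
    _ ≤ 2 - 2/((Y:ℝ)+1) := sum_inv_sq_aux Y
    _ ≤ 2 := by nlinarith [div_pos (by norm_num : (0:ℝ)<2) h1]


set_option maxHeartbeats 1000000 in
/-- one-dimensional pseudo-Poincaré inequality.
Let `ν` be a symmetric probability measure on `ℤ` which is essentially
decreasing: `ν n ≤ C₁ ν m` for `0 ≤ m ≤ n`.  Let `G` be a countable group with a
distinguished element `s`.  Then there is a constant `C_ν` (depending only on
`C₁`) such that for every finitely supported `f : G → ℝ` and every `y ∈ ℤ`,
`Σ_x |f(xs^y) − f(x)|² · G_ν(|y|) ≤ C_ν · y² · E_{s,ν}(f,f)`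
(the inequality `Σ_x |f(xs^y)−f(x)|² ≤ C_ν (y²/G_ν(|y|)) E_{s,ν}(f,f)` in
cleared-denominator form). -/
theorem statement2 (C₁ : ℝ) :
    ∃ Cν : ℝ, 0 < Cν ∧
      ∀ {G : Type} [Group G] [Countable G] (s : G) (ν : ℤ → ℝ),
        (∀ n, 0 ≤ ν n) →
        (∀ n, ν (-n) = ν n) →
        (∑' n : ℤ, ν n) = 1 →
        (∀ m n : ℤ, 0 ≤ m → m ≤ n → ν n ≤ C₁ * ν m) →
        ∀ f : G → ℝ, (Function.support f).Finite →
          ∀ y : ℤ,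
            (∑' x : G, (f (x * s ^ y) - f x) ^ 2) * truncMoment ν |y| ≤
              Cν * (y : ℝ) ^ 2 * dirichletForm s ν f := by
  classical
  refine ⟨24 * max C₁ 1, by positivity, ?_⟩
  intro G _ _ s ν hν0 hsym hsum1 hdec0 f hf y
  set A := max C₁ 1 with hAdef
  have hA1 : (1:ℝ) ≤ A := le_max_right _ _
  have hA0 : (0:ℝ) ≤ A := le_trans zero_le_one hA1
  have hdec : ∀ m n : ℤ, 0 ≤ m → m ≤ n → ν n ≤ A * ν m := fun m n hm hmn =>
    (hdec0 m n hm hmn).trans (mul_le_mul_of_nonneg_right (le_max_left _ _) (hν0 m))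
  have hνS : Summable ν := by
    by_contra h
    rw [tsum_eq_zero_of_not_summable h] at hsum1
    norm_num at hsum1
  set S : Finset G := hf.toFinset with hSdef
  -- summability of squared differences
  have hsq : ∀ a b : G, Summable fun x : G => (f (x * a) - f (x * b)) ^ 2 := by
    intro a b
    apply summable_of_ne_finset_zero (s := S.image (· * a⁻¹) ∪ S.image (· * b⁻¹))
    intro x hx
    have hxa : f (x * a) = 0 := by
      by_contra hne
      exact hx (Finset.mem_union_left _ (Finset.mem_image.2
        ⟨x * a, by simpa [hSdef, Set.Finite.mem_toFinset] using hne, mul_inv_cancel_right x a⟩))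
    have hxb : f (x * b) = 0 := by
      by_contra hne
      exact hx (Finset.mem_union_right _ (Finset.mem_image.2
        ⟨x * b, by simpa [hSdef, Set.Finite.mem_toFinset] using hne, mul_inv_cancel_right x b⟩))
    simp [hxa, hxb]
  have hsqz : ∀ c : ℤ, Summable fun x : G => (f (x * s ^ c) - f x) ^ 2 := by
    intro c; simpa using hsq (s ^ c) 1
  have hsqf : Summable fun x : G => f x ^ 2 := by
    apply summable_of_ne_finset_zero (s := S)
    intro x hx
    have : f x = 0 := by
      by_contra hne
      exact hx (by simpa [hSdef, Set.Finite.mem_toFinset] using hne)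
    simp [this]
  set h2 : ℤ → ℝ := fun z => ∑' x : G, (f (x * s ^ z) - f x) ^ 2 with hh2def
  have hh2nn : ∀ z, 0 ≤ h2 z := fun z => tsum_nonneg fun x => sq_nonneg _
  -- translation invariance
  have hT : ∀ (a : G) (c : ℤ), (∑' x : G, (f (x * a * s ^ c) - f (x * a)) ^ 2) = h2 c := by
    intro a c
    simpa using (Equiv.mulRight a).tsum_eq fun u : G => (f (u * s ^ c) - f u) ^ 2
  -- uniform bound on h2
  set B : ℝ := ∑' x : G, f x ^ 2 with hBdef
  have hBtrans : ∀ a : G, (∑' x : G, f (x * a) ^ 2) = B := by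
    intro a
    simpa using (Equiv.mulRight a).tsum_eq fun u : G => f u ^ 2
  have hsqfa : ∀ a : G, Summable fun x : G => f (x * a) ^ 2 := by
    intro a
    apply summable_of_ne_finset_zero (s := S.image (· * a⁻¹))
    intro x hx
    have hxa : f (x * a) = 0 := by
      by_contra hne
      exact hx (Finset.mem_image.2
        ⟨x * a, by simpa [hSdef, Set.Finite.mem_toFinset] using hne, mul_inv_cancel_right x a⟩)
    simp [hxa]
  have hh2le : ∀ z, h2 z ≤ 4 * B := by
    intro z
    have hle : ∀ x : G, (f (x * s ^ z) - f x) ^ 2 ≤ 2 * f (x * s ^ z) ^ 2 + 2 * f x ^ 2 := by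
      intro x; nlinarith [sq_nonneg (f (x * s ^ z) + f x)]
    calc h2 z ≤ ∑' x : G, (2 * f (x * s ^ z) ^ 2 + 2 * f x ^ 2) := by
          exact Summable.tsum_le_tsum hle (hsqz z) (((hsqfa (s ^ z)).mul_left 2).add (hsqf.mul_left 2))
      _ = 2 * (∑' x : G, f (x * s ^ z) ^ 2) + 2 * B := by
          rw [Summable.tsum_add ((hsqfa (s ^ z)).mul_left 2) (hsqf.mul_left 2), tsum_mul_left, tsum_mul_left]
      _ = 4 * B := by rw [hBtrans (s ^ z)]; ring
  set W : ℤ → ℝ := fun z => h2 z * ν z with hWdef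
  have hWnn : ∀ z, 0 ≤ W z := fun z => mul_nonneg (hh2nn z) (hν0 z)
  have hWsum : Summable W := by
    refine Summable.of_nonneg_of_le hWnn (fun z => ?_) (hνS.mul_left (4 * B))
    exact mul_le_mul_of_nonneg_right (hh2le z) (hν0 z)
  -- Dirichlet form as a sum over ℤ
  have hFsum' : Summable fun q : ℤ × G => (f (q.2 * s ^ q.1) - f q.2) ^ 2 * ν q.1 := by
    refine (summable_prod_of_nonneg fun q => mul_nonneg (sq_nonneg _) (hν0 _)).2 ⟨?_, ?_⟩
    · intro z; exact (hsqz z).mul_right (ν z)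
    · simp_rw [tsum_mul_right]
      exact hWsum
  have hFsum : Summable fun p : G × ℤ => (f (p.1 * s ^ p.2) - f p.1) ^ 2 * ν p.2 := by
    exact (Equiv.prodComm ℤ G).summable_iff.1 hFsum'
  set D : ℝ := ∑' z : ℤ, W z with hDdef
  have hDnn : 0 ≤ D := tsum_nonneg hWnn
  have hD : (∑' p : G × ℤ, (f (p.1 * s ^ p.2) - f p.1) ^ 2 * ν p.2) = D := by
    rw [← (Equiv.prodComm ℤ G).tsum_eq
      (fun p : G × ℤ => (f (p.1 * s ^ p.2) - f p.1) ^ 2 * ν p.2)]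
    simp only [Equiv.prodComm_apply, Prod.fst_swap, Prod.snd_swap]
    rw [Summable.tsum_prod' hFsum' fun z => (hsqz z).mul_right (ν z)]
    simp_rw [tsum_mul_right]
    rfl
  have hfin : ∀ T : Finset ℤ, (∑ z ∈ T, W z) ≤ D :=
    fun T => Summable.sum_le_tsum T (fun z _ => hWnn z) hWsum
  -- the chain/telescoping inequality
  have chain : ∀ (w z r : ℤ) (K : ℕ), (K:ℤ) * z + r = w →
      h2 w ≤ 2 * (K:ℝ)^2 * h2 z + 2 * h2 r := by
    intro w z r K hw
    have hpt : ∀ x : G, (f (x * s ^ w) - f x) ^ 2 ≤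
        2 * (K:ℝ) * ∑ j ∈ Finset.range K,
            (f (x * s ^ ((j:ℤ) * z) * s ^ z) - f (x * s ^ ((j:ℤ) * z))) ^ 2
        + 2 * (f (x * s ^ ((K:ℤ) * z) * s ^ r) - f (x * s ^ ((K:ℤ) * z))) ^ 2 := by
      intro x
      set g : ℕ → ℝ := fun j => f (x * s ^ ((j:ℤ) * z)) with hgdef
      have htel : ∑ j ∈ Finset.range K, (g (j+1) - g j) = g K - g 0 := Finset.sum_range_sub g K
      have hstep : ∀ j : ℕ, f (x * s ^ ((j:ℤ) * z) * s ^ z) = g (j+1) := by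
        intro j
        simp only [hgdef]
        rw [mul_assoc, ← zpow_add]
        congr 2
        push_cast; ring
      have hlast : x * s ^ ((K:ℤ) * z) * s ^ r = x * s ^ w := by
        rw [mul_assoc, ← zpow_add, hw]
      have hg0 : g 0 = f x := by simp [hgdef]
      have hsumrw : ∑ j ∈ Finset.range K,
          (f (x * s ^ ((j:ℤ) * z) * s ^ z) - f (x * s ^ ((j:ℤ) * z))) ^ 2
          = ∑ j ∈ Finset.range K, (g (j+1) - g j) ^ 2 := by
        apply Finset.sum_congr rfl
        intro j _
        rw [hstep j]
      rw [hsumrw, hlast]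
      have hcs : (∑ j ∈ Finset.range K, (g (j+1) - g j)) ^ 2 ≤
          (K:ℝ) * ∑ j ∈ Finset.range K, (g (j+1) - g j) ^ 2 := by
        simpa using sq_sum_le_card_mul_sum_sq (s := Finset.range K)
          (f := fun j => g (j+1) - g j)
      have hdecomp : f (x * s ^ w) - f x
          = (∑ j ∈ Finset.range K, (g (j+1) - g j)) + (f (x * s ^ w) - g K) := by
        rw [htel, hg0]; ring
      have hKnn : (0:ℝ) ≤ (K:ℝ) := Nat.cast_nonneg K
      have hb2 : (0:ℝ) ≤ (f (x * s ^ w) - g K) ^ 2 := sq_nonneg _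
      calc (f (x * s ^ w) - f x) ^ 2
          = ((∑ j ∈ Finset.range K, (g (j+1) - g j)) + (f (x * s ^ w) - g K)) ^ 2 := by
            rw [← hdecomp]
        _ ≤ 2 * (∑ j ∈ Finset.range K, (g (j+1) - g j)) ^ 2
              + 2 * (f (x * s ^ w) - g K) ^ 2 := by
            nlinarith [sq_nonneg ((∑ j ∈ Finset.range K, (g (j+1) - g j)) - (f (x * s ^ w) - g K))]
        _ ≤ 2 * (K:ℝ) * ∑ j ∈ Finset.range K, (g (j+1) - g j) ^ 2
              + 2 * (f (x * s ^ w) - g K) ^ 2 := by nlinarith [hcs]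
    -- summabilities
    have hsumj : ∀ j : ℕ, Summable fun x : G =>
        (f (x * s ^ ((j:ℤ) * z) * s ^ z) - f (x * s ^ ((j:ℤ) * z))) ^ 2 := by
      intro j
      simpa [mul_assoc] using hsq (s ^ ((j:ℤ) * z) * s ^ z) (s ^ ((j:ℤ) * z))
    have hsumK : Summable fun x : G =>
        (f (x * s ^ ((K:ℤ) * z) * s ^ r) - f (x * s ^ ((K:ℤ) * z))) ^ 2 := by
      simpa [mul_assoc] using hsq (s ^ ((K:ℤ) * z) * s ^ r) (s ^ ((K:ℤ) * z))
    have hsumsum : Summable fun x : G => ∑ j ∈ Finset.range K,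
        (f (x * s ^ ((j:ℤ) * z) * s ^ z) - f (x * s ^ ((j:ℤ) * z))) ^ 2 :=
      summable_sum fun j _ => hsumj j
    have hRHS : Summable fun x : G =>
        2 * (K:ℝ) * ∑ j ∈ Finset.range K,
            (f (x * s ^ ((j:ℤ) * z) * s ^ z) - f (x * s ^ ((j:ℤ) * z))) ^ 2
        + 2 * (f (x * s ^ ((K:ℤ) * z) * s ^ r) - f (x * s ^ ((K:ℤ) * z))) ^ 2 :=
      (hsumsum.mul_left _).add (hsumK.mul_left 2)
    calc h2 w ≤ ∑' x : G,
          (2 * (K:ℝ) * ∑ j ∈ Finset.range K,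
              (f (x * s ^ ((j:ℤ) * z) * s ^ z) - f (x * s ^ ((j:ℤ) * z))) ^ 2
          + 2 * (f (x * s ^ ((K:ℤ) * z) * s ^ r) - f (x * s ^ ((K:ℤ) * z))) ^ 2) := by
          exact Summable.tsum_le_tsum hpt (hsqz w) hRHS
      _ = 2 * (K:ℝ) * ∑' x : G, (∑ j ∈ Finset.range K,
              (f (x * s ^ ((j:ℤ) * z) * s ^ z) - f (x * s ^ ((j:ℤ) * z))) ^ 2)
          + 2 * ∑' x : G, (f (x * s ^ ((K:ℤ) * z) * s ^ r) - f (x * s ^ ((K:ℤ) * z))) ^ 2 := by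
          rw [Summable.tsum_add (hsumsum.mul_left _) (hsumK.mul_left 2), tsum_mul_left, tsum_mul_left]
      _ = 2 * (K:ℝ) * ∑ j ∈ Finset.range K, h2 z + 2 * h2 r := by
          rw [Summable.tsum_finsetSum fun j _ => hsumj j, hT (s ^ ((K:ℤ) * z)) r]
          congr 2
          exact Finset.sum_congr rfl fun j _ => hT (s ^ ((j:ℤ) * z)) z
      _ = 2 * (K:ℝ)^2 * h2 z + 2 * h2 r := by
          rw [Finset.sum_const, Finset.card_range, nsmul_eq_mul]
          ring
  clear_value S B h2 W D
  -- reduction to natural y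
  set Y : ℕ := y.natAbs with hYdef
  have hYabs : (Y:ℤ) = |y| := (Int.abs_eq_natAbs y).symm
  have hLHS : (∑' x : G, (f (x * s ^ y) - f x) ^ 2) = h2 (Y:ℤ) := by
    rcases le_or_gt 0 y with hy | hy
    · have : (Y:ℤ) = y := by omega
      rw [this, hh2def]
    · have hYy : (Y:ℤ) = -y := by omega
      rw [hYy]
      rw [← hT (s ^ y) (-y)]
      apply tsum_congr
      intro x
      have hx1 : x * s ^ y * s ^ (-y) = x := by
        rw [mul_assoc, ← zpow_add]
        simp
      rw [hx1]
      ring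
  have hy2 : (y:ℝ) ^ 2 = ((Y:ℤ):ℝ) ^ 2 := by
    rw [hYabs]
    push_cast
    rw [sq_abs]
  rw [hLHS, hYabs.symm, hy2]
  -- now prove the bound for natural Y
  rcases Nat.eq_zero_or_pos Y with hY0 | hY1
  · have h20 : h2 (Y:ℤ) = 0 := by
      rw [hh2def, hY0]
      norm_num
    rw [h20, zero_mul, hY0]
    norm_num
  -- main case : 1 ≤ Y
  set T : Finset ℤ := Finset.Icc (1:ℤ) (Y:ℤ) with hTdef
  -- truncated moment as a finite sum
  have htM : truncMoment ν (Y:ℤ) = ∑ n ∈ Finset.Icc (-(Y:ℤ)) (Y:ℤ), (n:ℝ)^2 * ν n := by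
    rw [truncMoment]
    rw [tsum_eq_sum (s := Finset.Icc (-(Y:ℤ)) (Y:ℤ)) ?_]
    · apply Finset.sum_congr rfl
      intro n hn
      rw [Finset.mem_Icc] at hn
      rw [if_pos (abs_le.2 ⟨hn.1, hn.2⟩)]
    · intro n hn
      rw [Finset.mem_Icc] at hn
      rw [if_neg]
      intro habs
      exact hn ⟨(abs_le.1 habs).1, (abs_le.1 habs).2⟩
  have htM2 : truncMoment ν (Y:ℤ) ≤ 2 * ∑ z ∈ T, (z:ℝ)^2 * ν z := by
    rw [htM]
    have hsplit : Finset.Icc (-(Y:ℤ)) (Y:ℤ) = Finset.Icc (-(Y:ℤ)) 0 ∪ T := by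
      rw [hTdef]
      ext n
      simp only [Finset.mem_Icc, Finset.mem_union]
      omega
    have hdisj : Disjoint (Finset.Icc (-(Y:ℤ)) 0) T := by
      rw [hTdef, Finset.disjoint_left]
      intro n hn hn'
      rw [Finset.mem_Icc] at hn hn'
      omega
    rw [hsplit, Finset.sum_union hdisj]
    have hneg : ∑ n ∈ Finset.Icc (-(Y:ℤ)) 0, (n:ℝ)^2 * ν n
        = ∑ n ∈ Finset.Icc (0:ℤ) (Y:ℤ), (n:ℝ)^2 * ν n := by
      apply Finset.sum_nbij' (i := fun n => -n) (j := fun n => -n)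
      · intro n hn
        rw [Finset.mem_Icc] at hn ⊢
        omega
      · intro n hn
        rw [Finset.mem_Icc] at hn ⊢
        omega
      · intro n _; ring
      · intro n _; ring
      · intro n _
        rw [← hsym n]
        push_cast
        ring
    have hzero : ∑ n ∈ Finset.Icc (0:ℤ) (Y:ℤ), (n:ℝ)^2 * ν n = ∑ z ∈ T, (z:ℝ)^2 * ν z := by
      have h01 : Finset.Icc (0:ℤ) (Y:ℤ) = insert 0 T := by
        rw [hTdef]
        ext n
        simp only [Finset.mem_Icc, Finset.mem_insert]
        omega
      rw [h01, Finset.sum_insert (by rw [hTdef]; simp)]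
      norm_num
    rw [hneg, hzero]
    linarith
  -- facts about division
  have hdivfacts : ∀ z ∈ T, 1 ≤ (Y:ℤ)/z ∧ (Y:ℤ)/z ≤ (Y:ℤ) ∧ 0 ≤ (Y:ℤ) % z ∧ (Y:ℤ) % z < z
      ∧ ((Y:ℤ)/z) * z + (Y:ℤ) % z = (Y:ℤ) := by
    intro z hz
    rw [hTdef, Finset.mem_Icc] at hz
    obtain ⟨hz1, hzY⟩ := hz
    have hzpos : (0:ℤ) < z := hz1
    have hr0 : 0 ≤ (Y:ℤ) % z := Int.emod_nonneg _ (by omega)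
    have hrz : (Y:ℤ) % z < z := Int.emod_lt_of_pos _ hzpos
    have hkr : ((Y:ℤ)/z) * z + (Y:ℤ) % z = (Y:ℤ) := by
      rw [mul_comm]
      exact Int.mul_ediv_add_emod _ _
    have hk1 : 1 ≤ (Y:ℤ)/z := by
      by_contra hcon
      push_neg at hcon
      have hk0 : (Y:ℤ)/z ≤ 0 := by omega
      have : ((Y:ℤ)/z) * z ≤ 0 := mul_nonpos_of_nonpos_of_nonneg hk0 (by omega)
      omega
    have hkY : (Y:ℤ)/z ≤ (Y:ℤ) := Int.ediv_le_self z (by positivity)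
    exact ⟨hk1, hkY, hr0, hrz, hkr⟩
  -- key per-z estimate
  have key : ∀ z ∈ T, (z:ℝ)^2 * ν z * h2 (Y:ℤ) ≤
      2*((Y:ℤ):ℝ)^2 * W z
      + 2*A*((Y:ℤ):ℝ)^2 * ((1/(((Y:ℤ)/z : ℤ):ℝ)^2) * W ((Y:ℤ) % z)) := by
    intro z hz
    obtain ⟨hk1, hkY, hr0, hrz, hkr⟩ := hdivfacts z hz
    rw [hTdef, Finset.mem_Icc] at hz
    obtain ⟨hz1, hzY⟩ := hz
    set k : ℤ := (Y:ℤ)/z with hkdef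
    set r : ℤ := (Y:ℤ) % z with hrdef
    set K : ℕ := k.toNat with hKdef
    have hKk : (K:ℤ) = k := Int.toNat_of_nonneg (by omega)
    have hchain : h2 (Y:ℤ) ≤ 2 * (k:ℝ)^2 * h2 z + 2 * h2 r := by
      have := chain (Y:ℤ) z r K (by rw [hKk]; exact hkr)
      have hcast : ((K:ℕ):ℝ) = ((k:ℤ):ℝ) := by exact_mod_cast hKk
      rwa [hcast] at this
    have hkzY : (k:ℝ) * (z:ℝ) ≤ ((Y:ℤ):ℝ) := by
      have : k * z ≤ (Y:ℤ) := by linarith [hkr, hr0]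
      exact_mod_cast this
    have hkR : (1:ℝ) ≤ (k:ℝ) := by exact_mod_cast hk1
    have hzR : (1:ℝ) ≤ (z:ℝ) := by exact_mod_cast hz1
    have hνzr : ν z ≤ A * ν r := hdec r z hr0 (le_of_lt hrz)
    have hkznn : (0:ℝ) ≤ (k:ℝ) * (z:ℝ) := mul_nonneg (by linarith) (by linarith)
    have e2 : (z:ℝ)^2 * (k:ℝ)^2 ≤ ((Y:ℤ):ℝ)^2 := by
      nlinarith [mul_self_le_mul_self hkznn hkzY]
    have e1 : (z:ℝ)^2 * ν z * h2 (Y:ℤ)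
        ≤ (z:ℝ)^2 * ν z * (2*(k:ℝ)^2*h2 z) + (z:ℝ)^2 * ν z * (2*h2 r) := by
      linarith [mul_le_mul_of_nonneg_left hchain (mul_nonneg (sq_nonneg ((z:ℝ))) (hν0 z))]
    have e3 : (z:ℝ)^2 * ν z * (2*(k:ℝ)^2*h2 z) ≤ 2*((Y:ℤ):ℝ)^2 * W z := by
      simp only [hWdef]
      linarith [mul_le_mul_of_nonneg_right e2 (mul_nonneg (hν0 z) (hh2nn z))]
    have e4 : (z:ℝ)^2 * ν z * (2*h2 r) ≤ 2*A*((Y:ℤ):ℝ)^2 * ((1/(k:ℝ)^2) * W r) := by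
      simp only [hWdef]
      have hkpos : (0:ℝ) < (k:ℝ)^2 := by positivity
      rw [show 2*A*((Y:ℤ):ℝ)^2 * ((1/(k:ℝ)^2) * (h2 r * ν r))
          = 2*(((Y:ℤ):ℝ)^2 * (A * ν r * h2 r)) / (k:ℝ)^2 by ring]
      rw [le_div_iff₀ hkpos]
      have t1 : (z:ℝ)^2 * ν z * (h2 r * (k:ℝ)^2)
          ≤ (z:ℝ)^2 * (A * ν r) * (h2 r * (k:ℝ)^2) :=
        mul_le_mul_of_nonneg_right
          (mul_le_mul_of_nonneg_left hνzr (sq_nonneg ((z:ℝ))))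
          (mul_nonneg (hh2nn r) (le_of_lt hkpos))
      have t2 : (z:ℝ)^2 * (k:ℝ)^2 * (A * ν r * h2 r)
          ≤ ((Y:ℤ):ℝ)^2 * (A * ν r * h2 r) :=
        mul_le_mul_of_nonneg_right e2
          (mul_nonneg (mul_nonneg hA0 (hν0 r)) (hh2nn r))
      linarith [t1, t2]
    linarith [e1, e3, e4]
  -- bound on the remainder double sum
  have hS2 : ∑ z ∈ T, (1/(((Y:ℤ)/z : ℤ):ℝ)^2) * W ((Y:ℤ) % z) ≤ 2 * D := by
    have hinj : ∀ z1 ∈ T, ∀ z2 ∈ T,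
        ((Y:ℤ)/z1, (Y:ℤ) % z1) = ((Y:ℤ)/z2, (Y:ℤ) % z2) → z1 = z2 := by
      intro z1 h1 z2 h2' heq
      obtain ⟨hk1, _, _, _, hkr1⟩ := hdivfacts z1 h1
      obtain ⟨_, _, _, _, hkr2⟩ := hdivfacts z2 h2'
      rw [Prod.mk.injEq] at heq
      obtain ⟨hek, her⟩ := heq
      have : ((Y:ℤ)/z1) * z1 = ((Y:ℤ)/z1) * z2 := by
        nth_rewrite 2 [hek]
        omega
      exact mul_left_cancel₀ (by omega) this
    have himg : (T.image fun z => ((Y:ℤ)/z, (Y:ℤ) % z))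
        ⊆ Finset.Icc (1:ℤ) (Y:ℤ) ×ˢ Finset.Icc (0:ℤ) (Y:ℤ) := by
      intro p hp
      rw [Finset.mem_image] at hp
      obtain ⟨z, hz, rfl⟩ := hp
      obtain ⟨hk1, hkY, hr0, hrz, _⟩ := hdivfacts z hz
      have hzY : z ≤ (Y:ℤ) := by
        rw [hTdef, Finset.mem_Icc] at hz
        exact hz.2
      rw [Finset.mem_product, Finset.mem_Icc, Finset.mem_Icc]
      exact ⟨⟨hk1, hkY⟩, hr0, by omega⟩
    calc ∑ z ∈ T, (1/(((Y:ℤ)/z : ℤ):ℝ)^2) * W ((Y:ℤ) % z)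
        = ∑ p ∈ T.image (fun z => ((Y:ℤ)/z, (Y:ℤ) % z)), (1/((p.1:ℤ):ℝ)^2) * W p.2 :=
          (Finset.sum_image (f := fun p : ℤ × ℤ => (1/((p.1:ℤ):ℝ)^2) * W p.2) hinj).symm
      _ ≤ ∑ p ∈ Finset.Icc (1:ℤ) (Y:ℤ) ×ˢ Finset.Icc (0:ℤ) (Y:ℤ), (1/((p.1:ℤ):ℝ)^2) * W p.2 := by
          apply Finset.sum_le_sum_of_subset_of_nonneg himg
          intro p _ _
          exact mul_nonneg (by positivity) (hWnn _)
      _ = (∑ k ∈ Finset.Icc (1:ℤ) (Y:ℤ), 1/((k:ℤ):ℝ)^2)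
            * (∑ r ∈ Finset.Icc (0:ℤ) (Y:ℤ), W r) := by
          rw [Finset.sum_product, Finset.sum_mul]
          apply Finset.sum_congr rfl
          intro k _
          rw [Finset.mul_sum]
      _ ≤ 2 * D := by
          apply mul_le_mul (sum_inv_sq_int Y) (hfin _)
            (Finset.sum_nonneg fun r _ => hWnn r)
            (by norm_num)
  -- assemble
  have hsum_le : ∑ z ∈ T, (z:ℝ)^2 * ν z * h2 (Y:ℤ)
      ≤ 2*((Y:ℤ):ℝ)^2 * (∑ z ∈ T, W z)
        + 2*A*((Y:ℤ):ℝ)^2 * (∑ z ∈ T, (1/(((Y:ℤ)/z : ℤ):ℝ)^2) * W ((Y:ℤ) % z)) := by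
    calc ∑ z ∈ T, (z:ℝ)^2 * ν z * h2 (Y:ℤ)
        ≤ ∑ z ∈ T, (2*((Y:ℤ):ℝ)^2 * W z
            + 2*A*((Y:ℤ):ℝ)^2 * ((1/(((Y:ℤ)/z : ℤ):ℝ)^2) * W ((Y:ℤ) % z))) :=
          Finset.sum_le_sum key
      _ = _ := by
          rw [Finset.sum_add_distrib, ← Finset.mul_sum, ← Finset.mul_sum]
  have hYsq : (0:ℝ) ≤ ((Y:ℤ):ℝ)^2 := sq_nonneg _
  have hTWle : (∑ z ∈ T, W z) ≤ D := hfin T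
  have hfinal : h2 (Y:ℤ) * truncMoment ν (Y:ℤ) ≤ 12 * A * ((Y:ℤ):ℝ)^2 * D := by
    calc h2 (Y:ℤ) * truncMoment ν (Y:ℤ)
        ≤ h2 (Y:ℤ) * (2 * ∑ z ∈ T, (z:ℝ)^2 * ν z) :=
          mul_le_mul_of_nonneg_left htM2 (hh2nn _)
      _ = 2 * ∑ z ∈ T, (z:ℝ)^2 * ν z * h2 (Y:ℤ) := by
          rw [← Finset.sum_mul]
          ring
      _ ≤ 2 * (2*((Y:ℤ):ℝ)^2 * (∑ z ∈ T, W z)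
            + 2*A*((Y:ℤ):ℝ)^2 * (∑ z ∈ T, (1/(((Y:ℤ)/z : ℤ):ℝ)^2) * W ((Y:ℤ) % z))) := by
          linarith [hsum_le]
      _ ≤ 2 * (2*((Y:ℤ):ℝ)^2 * D + 2*A*((Y:ℤ):ℝ)^2 * (2*D)) := by
          have c1 : 2*((Y:ℤ):ℝ)^2 * (∑ z ∈ T, W z) ≤ 2*((Y:ℤ):ℝ)^2 * D :=
            mul_le_mul_of_nonneg_left hTWle (by positivity)
          have c2 : 2*A*((Y:ℤ):ℝ)^2 * (∑ z ∈ T, (1/(((Y:ℤ)/z : ℤ):ℝ)^2) * W ((Y:ℤ) % z))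
              ≤ 2*A*((Y:ℤ):ℝ)^2 * (2*D) :=
            mul_le_mul_of_nonneg_left hS2 (by positivity)
          linarith [c1, c2]
      _ ≤ 12 * A * ((Y:ℤ):ℝ)^2 * D := by
          nlinarith [mul_nonneg (mul_nonneg (sub_nonneg.2 hA1) hYsq) hDnn]
  rw [dirichletForm, hD]
  calc h2 (Y:ℤ) * truncMoment ν (Y:ℤ) ≤ 12 * A * ((Y:ℤ):ℝ)^2 * D := hfinal
    _ = 24 * A * ((Y:ℤ):ℝ)^2 * (1/2 * D) := by ring
end

section
/- Let G be a countable group, ν a symmetric probability measure on ℤ satisfying ν(n) ≤ C_1 ν(m) for all 0 ≤ m ≤ n, s ∈ G a distinguished element, E_{s,ν} the associated Dirichlet form, and G_ν the truncated second moment of ν. Then for any two finitely supported functions f, g on G, any x ∈ G and y ∈ ℤ, |f∗g(xs^y) − f∗g(x)|² ≤ C_ν (G_ν(|y|))^{-1} y² · E_{s,ν}(f,f) · ‖g‖_2². -/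
/-- Convolution on a group: `f∗g(x) = Σ_{z∈G} f(z⁻¹x) g(z)`. -/
noncomputable def conv {G : Type*} [Group G] (f g : G → ℝ) (x : G) : ℝ :=
  ∑' z : G, f (z⁻¹ * x) * g z

open Finset Function
namespace St3
set_option linter.unusedSectionVars false
variable {G : Type*} [Group G]

noncomputable def Dq (s : G) (f : G → ℝ) (m : ℤ) : ℝ :=
  ∑' x : G, (f (x * s ^ m) - f x) ^ 2

lemma tsum_shift (h : G → ℝ) (c : G) : ∑' x : G, h (x * c) = ∑' x : G, h x :=
  (Equiv.mulRight c).tsum_eq h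

lemma Dq_nonneg (s : G) (f : G → ℝ) (m : ℤ) : 0 ≤ Dq s f m :=
  tsum_nonneg fun _ => sq_nonneg _

lemma summable_diff {f : G → ℝ} (hf : (support f).Finite) (a b : G) :
    Summable fun x : G => (f (x * a) - f (x * b)) ^ 2 := by
  classical
  apply summable_of_ne_finset_zero
    (s := hf.toFinset.image (· * a⁻¹) ∪ hf.toFinset.image (· * b⁻¹))
  intro x hx
  simp only [Finset.mem_union, Finset.mem_image, Set.Finite.mem_toFinset, mem_support] at hx
  push_neg at hx
  have h1 : f (x * a) = 0 := by
    by_contra h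
    exact absurd (by group) (hx.1 (x * a) h)
  have h2 : f (x * b) = 0 := by
    by_contra h
    exact absurd (by group) (hx.2 (x * b) h)
  simp [h1, h2]

lemma summable_Dq {f : G → ℝ} (hf : (support f).Finite) (s : G) (m : ℤ) :
    Summable fun x : G => (f (x * s ^ m) - f x) ^ 2 := by
  simpa using summable_diff hf (s ^ m) 1

lemma summable_sq {f : G → ℝ} (hf : (support f).Finite) :
    Summable fun x : G => f x ^ 2 := by
  apply summable_of_ne_finset_zero (s := hf.toFinset)
  intro x hx
  simp only [Set.Finite.mem_toFinset, mem_support, not_not] at hx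
  simp [hx]


lemma Dq_zero (s : G) (f : G → ℝ) : Dq s f 0 = 0 := by
  simp [Dq]

lemma Dq_neg (s : G) (f : G → ℝ) (m : ℤ) : Dq s f (-m) = Dq s f m := by
  unfold Dq
  calc ∑' x : G, (f (x * s ^ (-m)) - f x) ^ 2
      = ∑' x : G, ((fun w => (f (w * s ^ (-m)) - f w) ^ 2) (x * s ^ m)) :=
        (tsum_shift (fun w => (f (w * s ^ (-m)) - f w) ^ 2) (s ^ m)).symm
    _ = ∑' x : G, (f (x * s ^ m) - f x) ^ 2 := by
        apply tsum_congr; intro x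
        have : x * s ^ m * s ^ (-m) = x := by
          rw [mul_assoc, ← zpow_add, add_neg_cancel, zpow_zero, mul_one]
        simp only [this]
        ring

lemma Dq_sqrt_add {f : G → ℝ} (hf : (support f).Finite) (s : G) (a b : ℤ) :
    Real.sqrt (Dq s f (a + b)) ≤ Real.sqrt (Dq s f a) + Real.sqrt (Dq s f b) := by
  classical
  set u : G → ℝ := fun x => f (x * s ^ b * s ^ a) - f (x * s ^ b) with hu
  set v : G → ℝ := fun x => f (x * s ^ b) - f x with hv
  set T : Finset G := hf.toFinset.image (· * (s ^ b * s ^ a)⁻¹) ∪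
      hf.toFinset.image (· * (s ^ b)⁻¹) ∪ hf.toFinset with hT
  have hu0 : ∀ x ∉ T, u x = 0 := by
    intro x hx
    simp only [hT, Finset.mem_union, Finset.mem_image, Set.Finite.mem_toFinset,
      mem_support] at hx
    push_neg at hx
    have h1 : f (x * s ^ b * s ^ a) = 0 := by
      by_contra h
      rw [mul_assoc] at h
      exact absurd (by group) (hx.1.1 (x * (s ^ b * s ^ a)) h)
    have h2 : f (x * s ^ b) = 0 := by
      by_contra h
      exact absurd (by group) (hx.1.2 (x * s ^ b) h)
    simp [hu, h1, h2]
  have hv0 : ∀ x ∉ T, v x = 0 := by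
    intro x hx
    simp only [hT, Finset.mem_union, Finset.mem_image, Set.Finite.mem_toFinset,
      mem_support] at hx
    push_neg at hx
    have h2 : f (x * s ^ b) = 0 := by
      by_contra h
      exact absurd (by group) (hx.1.2 (x * s ^ b) h)
    have h3 : f x = 0 := hx.2
    simp [hv, h2, h3]
  have key : ∀ x : G, f (x * s ^ (a + b)) - f x = u x + v x := by
    intro x
    have : s ^ (a + b) = s ^ b * s ^ a := by rw [add_comm, zpow_add]
    simp only [hu, hv, this, ← mul_assoc]
    ring
  have hDab : Dq s f (a + b) = ∑ x ∈ T, (u x + v x) ^ 2 := by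
    unfold Dq
    rw [tsum_congr (fun x => by rw [key x])]
    exact tsum_eq_sum (fun x hx => by rw [hu0 x hx, hv0 x hx]; ring)
  have hDa : Dq s f a = ∑ x ∈ T, u x ^ 2 := by
    have h1 : Dq s f a = ∑' x : G, u x ^ 2 := by
      unfold Dq
      exact (tsum_shift (fun w => (f (w * s ^ a) - f w) ^ 2) (s ^ b)).symm
    rw [h1]
    exact tsum_eq_sum (fun x hx => by rw [hu0 x hx]; ring)
  have hDb : Dq s f b = ∑ x ∈ T, v x ^ 2 := by
    have h1 : Dq s f b = ∑' x : G, v x ^ 2 := rfl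
    rw [h1]
    exact tsum_eq_sum (fun x hx => by rw [hv0 x hx]; ring)
  -- now finite-dimensional Minkowski
  set SA := ∑ x ∈ T, u x ^ 2 with hSA
  set SB := ∑ x ∈ T, v x ^ 2 with hSB
  have hSA0 : 0 ≤ SA := Finset.sum_nonneg fun _ _ => sq_nonneg _
  have hSB0 : 0 ≤ SB := Finset.sum_nonneg fun _ _ => sq_nonneg _
  have hCS : ∑ x ∈ T, u x * v x ≤ Real.sqrt SA * Real.sqrt SB := by
    have h1 : (∑ x ∈ T, u x * v x) ^ 2 ≤ SA * SB :=
      Finset.sum_mul_sq_le_sq_mul_sq T u v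
    calc ∑ x ∈ T, u x * v x ≤ |∑ x ∈ T, u x * v x| := le_abs_self _
      _ = Real.sqrt ((∑ x ∈ T, u x * v x) ^ 2) := (Real.sqrt_sq_eq_abs _).symm
      _ ≤ Real.sqrt (SA * SB) := Real.sqrt_le_sqrt h1
      _ = Real.sqrt SA * Real.sqrt SB := Real.sqrt_mul hSA0 _
  have hexp : ∑ x ∈ T, (u x + v x) ^ 2 ≤ (Real.sqrt SA + Real.sqrt SB) ^ 2 := by
    have h2 : ∑ x ∈ T, (u x + v x) ^ 2 = SA + 2 * (∑ x ∈ T, u x * v x) + SB := by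
      rw [hSA, hSB, Finset.mul_sum, ← Finset.sum_add_distrib, ← Finset.sum_add_distrib]
      exact Finset.sum_congr rfl fun x _ => by ring
    have h3 : Real.sqrt SA ^ 2 = SA := Real.sq_sqrt hSA0
    have h4 : Real.sqrt SB ^ 2 = SB := Real.sq_sqrt hSB0
    nlinarith [hCS]
  rw [hDab, hDa, hDb]
  calc Real.sqrt (∑ x ∈ T, (u x + v x) ^ 2)
      ≤ Real.sqrt ((Real.sqrt SA + Real.sqrt SB) ^ 2) := Real.sqrt_le_sqrt hexp
    _ = Real.sqrt SA + Real.sqrt SB := Real.sqrt_sq (by positivity)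

lemma Dq_sqrt_nsmul {f : G → ℝ} (hf : (support f).Finite) (s : G) (k : ℕ) (n : ℤ) :
    Real.sqrt (Dq s f (k * n)) ≤ k * Real.sqrt (Dq s f n) := by
  induction k with
  | zero => simp [Dq_zero]
  | succ k ih =>
      have h1 : ((k + 1 : ℕ) : ℤ) * n = (k : ℤ) * n + n := by push_cast; ring
      calc Real.sqrt (Dq s f (((k + 1 : ℕ) : ℤ) * n))
          ≤ Real.sqrt (Dq s f ((k : ℤ) * n)) + Real.sqrt (Dq s f n) := by
            rw [h1]; exact Dq_sqrt_add hf s _ _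
        _ ≤ k * Real.sqrt (Dq s f n) + Real.sqrt (Dq s f n) := by linarith
        _ = ((k + 1 : ℕ) : ℝ) * Real.sqrt (Dq s f n) := by push_cast; ring

lemma Dq_nsmul_le {f : G → ℝ} (hf : (support f).Finite) (s : G) (k : ℕ) (n : ℤ) :
    Dq s f (k * n) ≤ (k : ℝ) ^ 2 * Dq s f n := by
  have h1 := Dq_sqrt_nsmul hf s k n
  have h2 : Dq s f ((k : ℤ) * n) = Real.sqrt (Dq s f ((k : ℤ) * n)) ^ 2 :=
    (Real.sq_sqrt (Dq_nonneg s f _)).symm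
  have h3 : Real.sqrt (Dq s f n) ^ 2 = Dq s f n := Real.sq_sqrt (Dq_nonneg s f n)
  nlinarith [Real.sqrt_nonneg (Dq s f ((k : ℤ) * n)), Real.sqrt_nonneg (Dq s f n)]

lemma Dq_add_le {f : G → ℝ} (hf : (support f).Finite) (s : G) (a b : ℤ) :
    Dq s f (a + b) ≤ 2 * Dq s f a + 2 * Dq s f b := by
  have h1 := Dq_sqrt_add hf s a b
  have h2 : Dq s f (a + b) = Real.sqrt (Dq s f (a + b)) ^ 2 :=
    (Real.sq_sqrt (Dq_nonneg s f _)).symm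
  have h3 : Real.sqrt (Dq s f a) ^ 2 = Dq s f a := Real.sq_sqrt (Dq_nonneg s f a)
  have h4 : Real.sqrt (Dq s f b) ^ 2 = Dq s f b := Real.sq_sqrt (Dq_nonneg s f b)
  nlinarith [Real.sqrt_nonneg (Dq s f (a + b)), Real.sqrt_nonneg (Dq s f a),
    Real.sqrt_nonneg (Dq s f b), sq_nonneg (Real.sqrt (Dq s f a) - Real.sqrt (Dq s f b))]

lemma Dq_le_norm {f : G → ℝ} (hf : (support f).Finite) (s : G) (m : ℤ) :
    Dq s f m ≤ 4 * ∑' x : G, f x ^ 2 := by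
  have h2 : Summable fun x : G => f x ^ 2 := summable_sq hf
  have h1 : Summable fun x : G => f (x * s ^ m) ^ 2 :=
    ((Equiv.mulRight (s ^ m)).summable_iff.2 h2 : _)
  have hle : ∀ x : G, (f (x * s ^ m) - f x) ^ 2 ≤ 2 * f (x * s ^ m) ^ 2 + 2 * f x ^ 2 := by
    intro x; nlinarith [sq_nonneg (f (x * s ^ m) + f x)]
  calc Dq s f m ≤ ∑' x : G, (2 * f (x * s ^ m) ^ 2 + 2 * f x ^ 2) :=
        Summable.tsum_le_tsum hle (summable_Dq hf s m) ((h1.mul_left 2).add (h2.mul_left 2))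
    _ = 2 * (∑' x : G, f (x * s ^ m) ^ 2) + 2 * ∑' x : G, f x ^ 2 := by
        rw [Summable.tsum_add (h1.mul_left 2) (h2.mul_left 2), tsum_mul_left, tsum_mul_left]
    _ = 4 * ∑' x : G, f x ^ 2 := by
        rw [tsum_shift (fun w => f w ^ 2) (s ^ m)]; ring

lemma nu_summable {ν : ℤ → ℝ} (h1 : (∑' n : ℤ, ν n) = 1) : Summable ν := by
  by_contra h
  rw [tsum_eq_zero_of_not_summable h] at h1
  norm_num at h1

variable {ν : ℤ → ℝ}

lemma summable_term_prod {f : G → ℝ} (hf : (support f).Finite) (s : G)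
    (hν0 : ∀ n, 0 ≤ ν n) (hνs : Summable ν) :
    Summable fun q : ℤ × G => (f (q.2 * s ^ q.1) - f q.2) ^ 2 * ν q.1 := by
  rw [summable_prod_of_nonneg (fun q => mul_nonneg (sq_nonneg _) (hν0 _))]
  refine ⟨fun n => (summable_Dq hf s n).mul_right (ν n), ?_⟩
  have heq : ∀ n : ℤ, (∑' x : G, (f (x * s ^ n) - f x) ^ 2 * ν n) = Dq s f n * ν n := by
    intro n; rw [tsum_mul_right]; rfl
  refine Summable.of_norm_bounded (hνs.mul_left (4 * ∑' x : G, f x ^ 2)) fun n => ?_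
  rw [Real.norm_eq_abs, abs_of_nonneg
    (by rw [heq]; exact mul_nonneg (Dq_nonneg s f n) (hν0 n)), heq]
  exact mul_le_mul_of_nonneg_right (Dq_le_norm hf s n) (hν0 n)

lemma summable_nuDq {f : G → ℝ} (hf : (support f).Finite) (s : G)
    (hν0 : ∀ n, 0 ≤ ν n) (hνs : Summable ν) :
    Summable fun n : ℤ => ν n * Dq s f n := by
  refine Summable.of_norm_bounded (hνs.mul_left (4 * ∑' x : G, f x ^ 2)) fun n => ?_
  rw [Real.norm_eq_abs, abs_of_nonneg (mul_nonneg (hν0 n) (Dq_nonneg s f n)), mul_comm]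
  exact mul_le_mul_of_nonneg_right (Dq_le_norm hf s n) (hν0 n)

lemma tsum_nuDq_eq {f : G → ℝ} (hf : (support f).Finite) (s : G)
    (hν0 : ∀ n, 0 ≤ ν n) (hνs : Summable ν) :
    ∑' n : ℤ, ν n * Dq s f n = 2 * dirichletForm s ν f := by
  have hsum2 := summable_term_prod hf s hν0 hνs
  have hswap : ∑' q : ℤ × G, (f (q.2 * s ^ q.1) - f q.2) ^ 2 * ν q.1
      = ∑' p : G × ℤ, (f (p.1 * s ^ p.2) - f p.1) ^ 2 * ν p.2 :=
    (Equiv.prodComm ℤ G).tsum_eq (fun p : G × ℤ => (f (p.1 * s ^ p.2) - f p.1) ^ 2 * ν p.2)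
  have hprod : ∑' q : ℤ × G, (f (q.2 * s ^ q.1) - f q.2) ^ 2 * ν q.1
      = ∑' n : ℤ, ∑' x : G, (f (x * s ^ n) - f x) ^ 2 * ν n :=
    Summable.tsum_prod' hsum2 (fun n => (summable_Dq hf s n).mul_right (ν n))
  have hinner : ∀ n : ℤ, (∑' x : G, (f (x * s ^ n) - f x) ^ 2 * ν n) = ν n * Dq s f n := by
    intro n; rw [tsum_mul_right, mul_comm]; rfl
  calc ∑' n : ℤ, ν n * Dq s f n
      = ∑' n : ℤ, ∑' x : G, (f (x * s ^ n) - f x) ^ 2 * ν n := by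
        exact (tsum_congr hinner).symm
    _ = ∑' p : G × ℤ, (f (p.1 * s ^ p.2) - f p.1) ^ 2 * ν p.2 := by rw [← hprod, hswap]
    _ = 2 * dirichletForm s ν f := by unfold dirichletForm; ring

lemma sum_nuDq_le {f : G → ℝ} (hf : (support f).Finite) (s : G)
    (hν0 : ∀ n, 0 ≤ ν n) (hνs : Summable ν) (T : Finset ℤ) :
    ∑ n ∈ T, ν n * Dq s f n ≤ 2 * dirichletForm s ν f := by
  rw [← tsum_nuDq_eq hf s hν0 hνs]
  exact Summable.sum_le_tsum T (fun n _ => mul_nonneg (hν0 n) (Dq_nonneg s f n))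
    (summable_nuDq hf s hν0 hνs)

lemma dirichletForm_nonneg (s : G) (f : G → ℝ) (hν0 : ∀ n, 0 ≤ ν n) :
    0 ≤ dirichletForm s ν f :=
  mul_nonneg (by norm_num) (tsum_nonneg fun p => mul_nonneg (sq_nonneg _) (hν0 _))

lemma basel_sum (M : ℕ) : ∑ d ∈ Finset.Icc 1 M, (1 : ℝ) / (d : ℝ) ^ 2 ≤ 2 - 1 / M := by
  induction M with
  | zero => simp
  | succ M ih =>
      rw [Finset.sum_Icc_succ_top (by omega)]
      rcases Nat.eq_zero_or_pos M with h | h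
      · subst h; norm_num
      · have hM : (1 : ℝ) ≤ (M : ℝ) := by exact_mod_cast h
        have key : (1 : ℝ) / ((M : ℝ) + 1) ^ 2 ≤ 1 / M - 1 / (M + 1) := by
          rw [div_sub_div _ _ (by positivity) (by positivity)]
          rw [div_le_div_iff₀ (by positivity) (by positivity)]
          ring_nf
          nlinarith
        push_cast
        linarith

lemma divisor_sq_sum (M : ℕ) (hM : M ≠ 0) :
    ∑ d ∈ M.divisors, (d : ℝ) ^ 2 ≤ 2 * (M : ℝ) ^ 2 := by
  have h1 : ∑ d ∈ M.divisors, (d : ℝ) ^ 2 = ∑ d ∈ M.divisors, ((M / d : ℕ) : ℝ) ^ 2 :=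
    (Nat.sum_div_divisors M (fun d => ((d : ℕ) : ℝ) ^ 2)).symm
  rw [h1]
  have h2 : ∀ d ∈ M.divisors, ((M / d : ℕ) : ℝ) ^ 2 ≤ (M : ℝ) ^ 2 * (1 / (d : ℝ) ^ 2) := by
    intro d hd
    rw [Nat.mem_divisors] at hd
    have hd0 : d ≠ 0 := by rintro rfl; exact hM (Nat.eq_zero_of_zero_dvd hd.1)
    have : ((M / d : ℕ) : ℝ) = (M : ℝ) / (d : ℝ) := by
      rw [Nat.cast_div hd.1 (by exact_mod_cast hd0)]
    rw [this, div_pow]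
    rw [div_eq_mul_one_div]
  calc ∑ d ∈ M.divisors, ((M / d : ℕ) : ℝ) ^ 2
      ≤ ∑ d ∈ M.divisors, (M : ℝ) ^ 2 * (1 / (d : ℝ) ^ 2) := Finset.sum_le_sum h2
    _ = (M : ℝ) ^ 2 * ∑ d ∈ M.divisors, (1 : ℝ) / (d : ℝ) ^ 2 := by rw [Finset.mul_sum]
    _ ≤ (M : ℝ) ^ 2 * ∑ d ∈ Finset.Icc 1 M, (1 : ℝ) / (d : ℝ) ^ 2 := by
        apply mul_le_mul_of_nonneg_left _ (by positivity)
        apply Finset.sum_le_sum_of_subset_of_nonneg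
        · intro d hd
          rw [Nat.mem_divisors] at hd
          rw [Finset.mem_Icc]
          exact ⟨Nat.one_le_iff_ne_zero.2 (by rintro rfl; exact hM (Nat.eq_zero_of_zero_dvd hd.1)),
            Nat.le_of_dvd (Nat.pos_of_ne_zero hM) hd.1⟩
        · intro d _ _; positivity
    _ ≤ (M : ℝ) ^ 2 * (2 - 1 / M) := by
        apply mul_le_mul_of_nonneg_left (basel_sum M) (by positivity)
    _ ≤ 2 * (M : ℝ) ^ 2 := by
        have : (0 : ℝ) ≤ 1 / M := by positivity
        nlinarith [sq_nonneg (M : ℝ)]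

lemma fiber_bound (y : ℕ) (a : ℕ → ℝ) (ha : ∀ r, 0 ≤ a r) :
    ∑ n ∈ Finset.Icc 1 y, (n : ℝ) ^ 2 * a (y % n) ≤
      2 * (y : ℝ) ^ 2 * ∑ r ∈ Finset.range y, a r := by
  classical
  rcases Nat.eq_zero_or_pos y with rfl | hy
  · simp
  have hmaps : ∀ n ∈ Finset.Icc 1 y, y % n ∈ Finset.range y := by
    intro n hn
    rw [Finset.mem_Icc] at hn
    rw [Finset.mem_range]
    exact lt_of_lt_of_le (Nat.mod_lt y (by omega)) hn.2
  rw [← Finset.sum_fiberwise_of_maps_to hmaps (fun n => (n : ℝ) ^ 2 * a (y % n))]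
  rw [Finset.mul_sum]
  apply Finset.sum_le_sum
  intro r hr
  rw [Finset.mem_range] at hr
  have hMne : y - r ≠ 0 := by omega
  have hsub : Finset.filter (fun n => y % n = r) (Finset.Icc 1 y) ⊆ (y - r).divisors := by
    intro n hn
    rw [Finset.mem_filter, Finset.mem_Icc] at hn
    rw [Nat.mem_divisors]
    refine ⟨⟨y / n, ?_⟩, hMne⟩
    have := Nat.div_add_mod y n
    omega
  calc ∑ n ∈ Finset.filter (fun n => y % n = r) (Finset.Icc 1 y), (n : ℝ) ^ 2 * a (y % n)
      = ∑ n ∈ Finset.filter (fun n => y % n = r) (Finset.Icc 1 y), a r * (n : ℝ) ^ 2 := by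
        apply Finset.sum_congr rfl
        intro n hn
        rw [Finset.mem_filter] at hn
        rw [hn.2, mul_comm]
    _ ≤ a r * (2 * ((y - r : ℕ) : ℝ) ^ 2) := by
        rw [← Finset.mul_sum]
        apply mul_le_mul_of_nonneg_left _ (ha r)
        calc ∑ n ∈ Finset.filter (fun n => y % n = r) (Finset.Icc 1 y), (n : ℝ) ^ 2
            ≤ ∑ n ∈ (y - r).divisors, (n : ℝ) ^ 2 :=
              Finset.sum_le_sum_of_subset_of_nonneg hsub (fun _ _ _ => by positivity)
          _ ≤ 2 * ((y - r : ℕ) : ℝ) ^ 2 := divisor_sq_sum _ hMne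
    _ ≤ 2 * (y : ℝ) ^ 2 * a r := by
        have h1 : ((y - r : ℕ) : ℝ) ≤ (y : ℝ) := by exact_mod_cast Nat.sub_le y r
        have h2 : (0 : ℝ) ≤ ((y - r : ℕ) : ℝ) := Nat.cast_nonneg _
        have h3 : ((y - r : ℕ) : ℝ) ^ 2 ≤ (y : ℝ) ^ 2 := by nlinarith
        have h4 := mul_le_mul_of_nonneg_left (by linarith : 2 * ((y - r : ℕ) : ℝ) ^ 2 ≤ 2 * (y : ℝ) ^ 2) (ha r)
        linarith [h4]

lemma main_bound {f : G → ℝ} (hf : (support f).Finite) (s : G) {ν : ℤ → ℝ} {C₁ : ℝ}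
    (hν0 : ∀ n, 0 ≤ ν n) (hνs : Summable ν)
    (hC₁ : ∀ m n : ℤ, 0 ≤ m → m ≤ n → ν n ≤ C₁ * ν m) (y : ℕ) :
    (∑ n ∈ Finset.Icc 1 y, (n : ℝ) ^ 2 * ν (n : ℤ)) * Dq s f (y : ℤ) ≤
      (4 + 8 * max C₁ 1) * (y : ℝ) ^ 2 * dirichletForm s ν f := by
  classical
  set E := dirichletForm s ν f with hE
  have hE0 : 0 ≤ E := dirichletForm_nonneg s f hν0
  set C := max C₁ 1 with hC
  have hC1 : (1 : ℝ) ≤ C := le_max_right _ _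
  have hC0 : (0 : ℝ) ≤ C := by linarith
  set a : ℕ → ℝ := fun r => ν (r : ℤ) * Dq s f (r : ℤ) with ha_def
  have ha : ∀ r, 0 ≤ a r := fun r => mul_nonneg (hν0 _) (Dq_nonneg s f _)
  have step : ∀ n ∈ Finset.Icc 1 y,
      (n : ℝ) ^ 2 * ν (n : ℤ) * Dq s f (y : ℤ) ≤
        2 * (y : ℝ) ^ 2 * (ν (n : ℤ) * Dq s f (n : ℤ)) + 2 * C * ((n : ℝ) ^ 2 * a (y % n)) := by
    intro n hn
    rw [Finset.mem_Icc] at hn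
    obtain ⟨hn1, hny⟩ := hn
    set k := y / n with hk
    set r := y % n with hr
    have hdm : n * k + r = y := by rw [hk, hr]; exact Nat.div_add_mod y n
    have hyn : y = k * n + r := by rw [Nat.mul_comm k n]; omega
    have hdecomp : (y : ℤ) = (k : ℤ) * (n : ℤ) + (r : ℤ) := by exact_mod_cast hyn
    have hD : Dq s f (y : ℤ) ≤ 2 * ((k : ℝ) ^ 2 * Dq s f (n : ℤ)) + 2 * Dq s f (r : ℤ) := by
      have h1 : Dq s f (y : ℤ) ≤ 2 * Dq s f ((k : ℤ) * (n : ℤ)) + 2 * Dq s f (r : ℤ) := by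
        rw [hdecomp]; exact Dq_add_le hf s _ _
      have h2 := Dq_nsmul_le hf s k (n : ℤ)
      linarith
    have hbase : (n : ℝ) ^ 2 * ν (n : ℤ) * Dq s f (y : ℤ) ≤
        (n : ℝ) ^ 2 * ν (n : ℤ) * (2 * ((k : ℝ) ^ 2 * Dq s f (n : ℤ)) + 2 * Dq s f (r : ℤ)) := by
      apply mul_le_mul_of_nonneg_left hD
      have := hν0 (n : ℤ); positivity
    have hnk : (n : ℝ) * (k : ℝ) ≤ (y : ℝ) := by
      have : n * k ≤ y := by omega
      exact_mod_cast this

    have hnk0 : (0 : ℝ) ≤ (n : ℝ) * (k : ℝ) := by positivity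
    have hsq : ((n : ℝ) * (k : ℝ)) ^ 2 ≤ (y : ℝ) ^ 2 := by nlinarith
    have ht1 : (n : ℝ) ^ 2 * ν (n : ℤ) * (2 * ((k : ℝ) ^ 2 * Dq s f (n : ℤ)))
        ≤ 2 * (y : ℝ) ^ 2 * (ν (n : ℤ) * Dq s f (n : ℤ)) := by
      have hnn : (0 : ℝ) ≤ ν (n : ℤ) * Dq s f (n : ℤ) :=
        mul_nonneg (hν0 _) (Dq_nonneg s f _)
      calc (n : ℝ) ^ 2 * ν (n : ℤ) * (2 * ((k : ℝ) ^ 2 * Dq s f (n : ℤ)))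
          = 2 * ((n : ℝ) * (k : ℝ)) ^ 2 * (ν (n : ℤ) * Dq s f (n : ℤ)) := by ring
        _ ≤ 2 * (y : ℝ) ^ 2 * (ν (n : ℤ) * Dq s f (n : ℤ)) := by nlinarith
    have ht2 : (n : ℝ) ^ 2 * ν (n : ℤ) * (2 * Dq s f (r : ℤ))
        ≤ 2 * C * ((n : ℝ) ^ 2 * a r) := by
      have hν_r : ν (n : ℤ) * Dq s f (r : ℤ) ≤ C * (ν (r : ℤ) * Dq s f (r : ℤ)) := by
        have h1 : ν (n : ℤ) ≤ C₁ * ν (r : ℤ) := by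
          apply hC₁ (r : ℤ) (n : ℤ) (by positivity)
          have : r < n := Nat.mod_lt y (by omega)
          exact_mod_cast this.le
        have h2 : C₁ * ν (r : ℤ) ≤ C * ν (r : ℤ) :=
          mul_le_mul_of_nonneg_right (le_max_left _ _) (hν0 _)
        have h3 : ν (n : ℤ) ≤ C * ν (r : ℤ) := h1.trans h2
        calc ν (n : ℤ) * Dq s f (r : ℤ) ≤ C * ν (r : ℤ) * Dq s f (r : ℤ) :=
              mul_le_mul_of_nonneg_right h3 (Dq_nonneg s f _)
          _ = C * (ν (r : ℤ) * Dq s f (r : ℤ)) := by ring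
      calc (n : ℝ) ^ 2 * ν (n : ℤ) * (2 * Dq s f (r : ℤ))
          = 2 * (n : ℝ) ^ 2 * (ν (n : ℤ) * Dq s f (r : ℤ)) := by ring
        _ ≤ 2 * (n : ℝ) ^ 2 * (C * (ν (r : ℤ) * Dq s f (r : ℤ))) := by
            apply mul_le_mul_of_nonneg_left hν_r (by positivity)
        _ = 2 * C * ((n : ℝ) ^ 2 * a r) := by rw [ha_def]; ring
    calc (n : ℝ) ^ 2 * ν (n : ℤ) * Dq s f (y : ℤ)
        ≤ (n : ℝ) ^ 2 * ν (n : ℤ) * (2 * ((k : ℝ) ^ 2 * Dq s f (n : ℤ)) + 2 * Dq s f (r : ℤ)) :=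
          hbase
      _ = (n : ℝ) ^ 2 * ν (n : ℤ) * (2 * ((k : ℝ) ^ 2 * Dq s f (n : ℤ)))
          + (n : ℝ) ^ 2 * ν (n : ℤ) * (2 * Dq s f (r : ℤ)) := by ring
      _ ≤ 2 * (y : ℝ) ^ 2 * (ν (n : ℤ) * Dq s f (n : ℤ)) + 2 * C * ((n : ℝ) ^ 2 * a (y % n)) :=
          add_le_add ht1 ht2
  have hsum1 : ∑ n ∈ Finset.Icc 1 y, ν (n : ℤ) * Dq s f (n : ℤ) ≤ 2 * E := by
    have himg : ∑ m ∈ (Finset.Icc 1 y).image (Nat.cast : ℕ → ℤ), ν m * Dq s f m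
        = ∑ n ∈ Finset.Icc 1 y, ν (n : ℤ) * Dq s f (n : ℤ) :=
      Finset.sum_image (fun p _ q _ h => Nat.cast_injective h)
    rw [← himg]
    exact sum_nuDq_le hf s hν0 hνs _
  have hsum2 : ∑ r ∈ Finset.range y, a r ≤ 2 * E := by
    have himg : ∑ m ∈ (Finset.range y).image (Nat.cast : ℕ → ℤ), ν m * Dq s f m
        = ∑ r ∈ Finset.range y, a r :=
      Finset.sum_image (fun p _ q _ h => Nat.cast_injective h)
    rw [← himg]
    exact sum_nuDq_le hf s hν0 hνs _
  calc (∑ n ∈ Finset.Icc 1 y, (n : ℝ) ^ 2 * ν (n : ℤ)) * Dq s f (y : ℤ)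
      = ∑ n ∈ Finset.Icc 1 y, (n : ℝ) ^ 2 * ν (n : ℤ) * Dq s f (y : ℤ) := Finset.sum_mul _ _ _
    _ ≤ ∑ n ∈ Finset.Icc 1 y, (2 * (y : ℝ) ^ 2 * (ν (n : ℤ) * Dq s f (n : ℤ))
          + 2 * C * ((n : ℝ) ^ 2 * a (y % n))) := Finset.sum_le_sum step
    _ = 2 * (y : ℝ) ^ 2 * (∑ n ∈ Finset.Icc 1 y, ν (n : ℤ) * Dq s f (n : ℤ))
          + 2 * C * ∑ n ∈ Finset.Icc 1 y, (n : ℝ) ^ 2 * a (y % n) := by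
        rw [Finset.sum_add_distrib, ← Finset.mul_sum, ← Finset.mul_sum]
    _ ≤ 2 * (y : ℝ) ^ 2 * (2 * E) + 2 * C * (2 * (y : ℝ) ^ 2 * ∑ r ∈ Finset.range y, a r) :=
        add_le_add (mul_le_mul_of_nonneg_left hsum1 (by positivity))
          (mul_le_mul_of_nonneg_left (fiber_bound y a ha) (by positivity))
    _ ≤ 2 * (y : ℝ) ^ 2 * (2 * E) + 2 * C * (2 * (y : ℝ) ^ 2 * (2 * E)) := by
        have := mul_le_mul_of_nonneg_left hsum2 (by positivity : (0:ℝ) ≤ 2 * (y : ℝ) ^ 2)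
        have := mul_le_mul_of_nonneg_left this (by positivity : (0:ℝ) ≤ 2 * C)
        linarith
    _ = (4 + 8 * C) * (y : ℝ) ^ 2 * E := by ring

lemma trunc_le {ν : ℤ → ℝ} (hν0 : ∀ n, 0 ≤ ν n) (hsym : ∀ n, ν (-n) = ν n) (y : ℤ) :
    truncMoment ν |y| ≤ 2 * ∑ n ∈ Finset.Icc 1 y.natAbs, (n : ℝ) ^ 2 * ν (n : ℤ) := by
  classical
  set Y := |y| with hY
  have hY0 : 0 ≤ Y := abs_nonneg y
  have h1 : truncMoment ν Y = ∑ n ∈ Finset.Icc (-Y) Y, (n : ℝ) ^ 2 * ν n := by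
    unfold truncMoment
    rw [tsum_eq_sum (s := Finset.Icc (-Y) Y)
      (fun n hn => if_neg (by rw [Finset.mem_Icc] at hn; rw [abs_le]; exact hn))]
    apply Finset.sum_congr rfl
    intro n hn
    rw [Finset.mem_Icc] at hn
    rw [if_pos (abs_le.2 hn)]
  have hsplit : Finset.Icc (-Y) Y = Finset.Icc (-Y) (-1) ∪ Finset.Icc 0 Y := by
    ext n; simp only [Finset.mem_Icc, Finset.mem_union]; omega
  have hdisj : Disjoint (Finset.Icc (-Y) (-1)) (Finset.Icc 0 Y) := by
    rw [Finset.disjoint_left]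
    intro n hn hn'
    rw [Finset.mem_Icc] at hn hn'
    omega
  have hneg : ∑ n ∈ Finset.Icc (-Y) (-1), (n : ℝ) ^ 2 * ν n
      = ∑ n ∈ Finset.Icc 1 Y, (n : ℝ) ^ 2 * ν n := by
    apply Finset.sum_nbij' (fun n => -n) (fun n => -n)
    · intro n hn; rw [Finset.mem_Icc] at hn ⊢; omega
    · intro n hn; rw [Finset.mem_Icc] at hn ⊢; omega
    · intro n _; ring
    · intro n _; ring
    · intro n _
      have h2 : ν n = ν (-n) := (hsym n).symm
      push_cast
      rw [h2]
      ring
  have hzero : ∑ n ∈ Finset.Icc 0 Y, (n : ℝ) ^ 2 * ν n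
      = ∑ n ∈ Finset.Icc 1 Y, (n : ℝ) ^ 2 * ν n := by
    have hins : Finset.Icc 0 Y = insert 0 (Finset.Icc 1 Y) := by
      ext n
      simp only [Finset.mem_Icc, Finset.mem_insert]
      omega
    rw [hins, Finset.sum_insert (by rw [Finset.mem_Icc]; omega)]
    norm_num
  have hcast : ∑ n ∈ Finset.Icc (1 : ℤ) Y, (n : ℝ) ^ 2 * ν n
      = ∑ n ∈ Finset.Icc 1 y.natAbs, (n : ℝ) ^ 2 * ν (n : ℤ) := by
    have hYn : Y = (y.natAbs : ℤ) := by rw [hY]; exact Int.abs_eq_natAbs y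
    refine Finset.sum_nbij' (fun n => n.toNat) (fun n => (n : ℤ)) ?_ ?_ ?_ ?_ ?_
    · intro n hn
      simp only [Finset.mem_Icc, hYn] at hn ⊢
      omega
    · intro n hn
      simp only [Finset.mem_Icc, hYn] at hn ⊢
      omega
    · intro n hn; simp only [Finset.mem_Icc, hYn] at hn
      show ((n.toNat : ℕ) : ℤ) = n; omega
    · intro n hn; simp only [Finset.mem_Icc, hYn] at hn
      show ((n : ℤ)).toNat = n; omega
    · intro n hn
      simp only [Finset.mem_Icc, hYn] at hn
      have h3 : ((n.toNat : ℕ) : ℤ) = n := by omega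
      have h4 : ((n.toNat : ℕ) : ℝ) = (n : ℝ) := by exact_mod_cast h3
      simp only [h3, h4]
  rw [h1, hsplit, Finset.sum_union hdisj, hneg, hzero, hcast]
  linarith [Finset.sum_nonneg (fun (n : ℕ) (_ : n ∈ Finset.Icc 1 y.natAbs) =>
    mul_nonneg (by positivity : (0:ℝ) ≤ (n:ℝ)^2) (hν0 (n : ℤ)))]

lemma conv_sq_le {f g : G → ℝ} (hf : (support f).Finite) (hg : (support g).Finite)
    (s : G) (x : G) (y : ℤ) :
    (conv f g (x * s ^ y) - conv f g x) ^ 2 ≤ Dq s f y * ∑' z : G, g z ^ 2 := by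
  classical
  set T := hg.toFinset with hT
  have hconv : ∀ w : G, conv f g w = ∑ z ∈ T, f (z⁻¹ * w) * g z := by
    intro w
    exact tsum_eq_sum (fun z hz => by
      rw [(by simpa [hT] using hz : g z = 0), mul_zero])
  rw [hconv, hconv, ← Finset.sum_sub_distrib]
  have hre : ∀ z : G, f (z⁻¹ * (x * s ^ y)) * g z - f (z⁻¹ * x) * g z
      = (f ((z⁻¹ * x) * s ^ y) - f (z⁻¹ * x)) * g z := by
    intro z; rw [← mul_assoc]; ring
  rw [Finset.sum_congr rfl (fun z _ => hre z)]
  refine (Finset.sum_mul_sq_le_sq_mul_sq T _ g).trans ?_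
  have hb1 : ∑ z ∈ T, (f ((z⁻¹ * x) * s ^ y) - f (z⁻¹ * x)) ^ 2 ≤ Dq s f y := by
    have himg : ∑ z ∈ T, (f ((z⁻¹ * x) * s ^ y) - f (z⁻¹ * x)) ^ 2
        = ∑ w ∈ T.image (fun z => z⁻¹ * x), (f (w * s ^ y) - f w) ^ 2 := by
      refine Finset.sum_nbij' (fun z => z⁻¹ * x) (fun w => x * w⁻¹) ?_ ?_ ?_ ?_ ?_
      · intro z hz; exact Finset.mem_image_of_mem _ hz
      · intro w hw
        rw [Finset.mem_image] at hw
        obtain ⟨z, hz, rfl⟩ := hw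
        simpa [mul_assoc] using hz
      · intro z _; group
      · intro w _; group
      · intro z _; rfl
    rw [himg]
    exact Summable.sum_le_tsum _ (fun _ _ => sq_nonneg _) (summable_Dq hf s y)
  have hb2 : ∑ z ∈ T, g z ^ 2 ≤ ∑' z : G, g z ^ 2 :=
    Summable.sum_le_tsum T (fun _ _ => sq_nonneg _) (summable_sq hg)
  exact mul_le_mul hb1 hb2 (Finset.sum_nonneg fun _ _ => sq_nonneg _) (Dq_nonneg s f y)

end St3

/-- Under the hypotheses of the one-dimensional
pseudo-Poincaré inequality (symmetric essentially decreasing probability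
measure `ν` on `ℤ`, distinguished element `s` of a countable group `G`), for
any two finitely supported functions `f, g`, any `x ∈ G` and `y ∈ ℤ`,
`|f∗g(xs^y) − f∗g(x)|² · G_ν(|y|) ≤ C_ν · y² · E_{s,ν}(f,f) · ‖g‖₂²`
(cleared-denominator form of
`|f∗g(xs^y) − f∗g(x)|² ≤ C_ν (G_ν(|y|))⁻¹ y² E_{s,ν}(f,f) ‖g‖₂²`). -/


theorem statement3 (C₁ : ℝ) :
    ∃ Cν : ℝ, 0 < Cν ∧
      ∀ {G : Type} [Group G] [Countable G] (s : G) (ν : ℤ → ℝ),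
        (∀ n, 0 ≤ ν n) →
        (∀ n, ν (-n) = ν n) →
        (∑' n : ℤ, ν n) = 1 →
        (∀ m n : ℤ, 0 ≤ m → m ≤ n → ν n ≤ C₁ * ν m) →
        ∀ f g : G → ℝ, (Function.support f).Finite → (Function.support g).Finite →
          ∀ (x : G) (y : ℤ),
            (conv f g (x * s ^ y) - conv f g x) ^ 2 * truncMoment ν |y| ≤
              Cν * (y : ℝ) ^ 2 * dirichletForm s ν f * (∑' z : G, (g z) ^ 2) := by
  refine ⟨8 + 16 * max C₁ 1, by nlinarith [le_max_right C₁ 1], ?_⟩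
  intro G _ _ s ν hν0 hsym htsum hC₁ f g hf hg x y
  have hνs : Summable ν := St3.nu_summable htsum
  have hE0 : 0 ≤ dirichletForm s ν f := St3.dirichletForm_nonneg s f hν0
  have hg2 : 0 ≤ ∑' z : G, g z ^ 2 := tsum_nonneg fun _ => sq_nonneg _
  have htr : 0 ≤ truncMoment ν |y| := by
    apply tsum_nonneg
    intro n
    split
    · exact mul_nonneg (sq_nonneg _) (hν0 n)
    · exact le_refl 0
  set Y := y.natAbs with hYdef
  have hDy : St3.Dq s f y = St3.Dq s f (Y : ℤ) := by
    rcases Int.natAbs_eq y with h | h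
    · rw [← hYdef] at h; exact h ▸ rfl
    · rw [← hYdef] at h; rw [h, St3.Dq_neg]
  have hYsq : ((Y : ℕ) : ℝ) ^ 2 = (y : ℝ) ^ 2 := by
    have h3 : ((Y : ℕ) : ℤ) = |y| := (Int.abs_eq_natAbs y).symm
    have h4 : ((Y : ℕ) : ℝ) = |(y : ℝ)| := by exact_mod_cast congrArg (fun z : ℤ => (z : ℝ)) h3
    rw [h4, sq_abs]
  have h1 : (conv f g (x * s ^ y) - conv f g x) ^ 2 ≤ St3.Dq s f y * ∑' z : G, g z ^ 2 :=
    St3.conv_sq_le hf hg s x y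
  have hmain := St3.main_bound hf s hν0 hνs hC₁ Y
  have hkey : St3.Dq s f (Y : ℤ) * truncMoment ν |y| ≤
      (8 + 16 * max C₁ 1) * ((Y : ℕ) : ℝ) ^ 2 * dirichletForm s ν f := by
    calc St3.Dq s f (Y : ℤ) * truncMoment ν |y|
        ≤ St3.Dq s f (Y : ℤ) * (2 * ∑ n ∈ Finset.Icc 1 Y, (n : ℝ) ^ 2 * ν (n : ℤ)) :=
          mul_le_mul_of_nonneg_left (St3.trunc_le hν0 hsym y) (St3.Dq_nonneg s f _)
      _ = 2 * ((∑ n ∈ Finset.Icc 1 Y, (n : ℝ) ^ 2 * ν (n : ℤ)) * St3.Dq s f (Y : ℤ)) := by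
          ring
      _ ≤ 2 * ((4 + 8 * max C₁ 1) * ((Y : ℕ) : ℝ) ^ 2 * dirichletForm s ν f) := by
          linarith [hmain]
      _ = (8 + 16 * max C₁ 1) * ((Y : ℕ) : ℝ) ^ 2 * dirichletForm s ν f := by ring
  calc (conv f g (x * s ^ y) - conv f g x) ^ 2 * truncMoment ν |y|
      ≤ (St3.Dq s f y * ∑' z : G, g z ^ 2) * truncMoment ν |y| :=
        mul_le_mul_of_nonneg_right h1 htr
    _ = (∑' z : G, g z ^ 2) * (St3.Dq s f (Y : ℤ) * truncMoment ν |y|) := by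
        rw [hDy]; ring
    _ ≤ (∑' z : G, g z ^ 2) *
          ((8 + 16 * max C₁ 1) * ((Y : ℕ) : ℝ) ^ 2 * dirichletForm s ν f) :=
        mul_le_mul_of_nonneg_left hkey hg2
    _ = (8 + 16 * max C₁ 1) * (y : ℝ) ^ 2 * dirichletForm s ν f * ∑' z : G, g z ^ 2 := by
        rw [hYsq]; ring
end

section
/- Let G be a nilpotent group generated by a k-tuple S with weight system 𝔴 and associated filtration G^𝔴_j. Suppose c is a formal commutator over S whose image in G projects to a non-torsion (free) element of G^𝔴_j/G^𝔴_{j+1}, where w(c) = w̄_j. Then every letter s appearing in the build-word of c satisfies w(s) = w̄_{j_𝔴(s)}, where j_𝔴(s) = max{j : ∃ u ∈ ℕ, s^u ∈ G^𝔴_j}; that is, c only uses letters in the core of (𝔴,S). -/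
/-- Formal commutators over a `k`-letter alphabet with signs. -/
inductive FC (k : ℕ) : Type
  | gen : Fin k → Bool → FC k
  | comm : FC k → FC k → FC k
  deriving DecidableEq

open scoped commutatorElement

namespace FC

variable {k : ℕ}

/-- The weight of a formal commutator: the sum of the weights of its letters. -/
def weight (w : Fin k → ℝ) : FC k → ℝ
  | gen i _ => w i
  | comm a b => weight w a + weight w b

/-- The image of a formal commutator in a group `G`. -/
def image {G : Type*} [Group G] (S : Fin k → G) : FC k → G
  | gen i b => if b then S i else (S i)⁻¹
  | comm a b => ⁅image S a, image S b⁆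

/-- The list of letters (generator indices) in the build-word of a commutator. -/
def letters : FC k → List (Fin k)
  | gen i _ => [i]
  | comm a b => letters a ++ letters b

end FC

/-- The subgroup generated by the images of all formal commutators of weight
at least the threshold `t`. -/
def weightSubgroup {k : ℕ} {G : Type*} [Group G] (S : Fin k → G) (w : Fin k → ℝ)
    (t : ℝ) : Subgroup G :=
  Subgroup.closure { g | ∃ c : FC k, t ≤ FC.weight w c ∧ FC.image S c = g }

/-- `j_𝔴(s) = max{j : ∃ u ∈ ℕ, u > 0, s^u ∈ G^𝔴_j}`. -/
noncomputable def jIndex {k : ℕ} {G : Type*} [Group G] (S : Fin k → G) (w : Fin k → ℝ)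
    (wbar : ℕ → ℝ) (s : G) : ℕ :=
  sSup { j : ℕ | ∃ u : ℕ, 0 < u ∧ s ^ u ∈ weightSubgroup S w (wbar j) }

namespace St10

open FC Subgroup

variable {k : ℕ} {G : Type*} [Group G]

theorem wsub_mono (S : Fin k → G) (w : Fin k → ℝ) {a b : ℝ} (h : a ≤ b) :
    weightSubgroup S w b ≤ weightSubgroup S w a :=
  Subgroup.closure_mono (fun g hg => by
    obtain ⟨c, hc, hgc⟩ := hg
    exact ⟨c, h.trans hc, hgc⟩)

theorem image_mem (S : Fin k → G) (w : Fin k → ℝ) {t : ℝ} (c : FC k)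
    (h : t ≤ FC.weight w c) : FC.image S c ∈ weightSubgroup S w t :=
  Subgroup.subset_closure ⟨c, h, rfl⟩

theorem weight_pos (w : Fin k → ℝ) (hw : ∀ i, 0 < w i) :
    ∀ c : FC k, 0 < FC.weight w c
  | FC.gen i _ => hw i
  | FC.comm a b => add_pos (weight_pos w hw a) (weight_pos w hw b)

theorem image_mem_lcs (S : Fin k → G) (w : Fin k → ℝ) (hw : ∀ i, 0 < w i)
    (M : ℝ) (hM : ∀ i, w i ≤ M) (c : FC k) :
    ∀ p : ℕ, M * 2 ^ p < FC.weight w c → FC.image S c ∈ Subgroup.lowerCentralSeries (⊤ : Subgroup G) p := by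
  induction c with
  | gen i b =>
    intro p h
    exfalso
    have hM0 : 0 < M := (hw i).trans_le (hM i)
    have h1 : (1:ℝ) ≤ 2 ^ p := one_le_pow₀ (by norm_num)
    have : FC.weight w (FC.gen i b) ≤ M * 2 ^ p := by
      simp only [FC.weight]
      calc w i ≤ M := hM i
        _ = M * 1 := (mul_one M).symm
        _ ≤ M * 2 ^ p := by nlinarith
    linarith
  | comm a b iha ihb =>
    intro p h
    match p with
    | 0 => simp [Subgroup.lowerCentralSeries]
    | p + 1 =>
      have hwsum : FC.weight w (FC.comm a b) = FC.weight w a + FC.weight w b := rfl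
      have h2 : M * 2 ^ p < FC.weight w a ∨ M * 2 ^ p < FC.weight w b := by
        by_contra hc
        push_neg at hc
        have : (2:ℝ) ^ (p+1) = 2 * 2 ^ p := by ring
        rw [hwsum] at h
        rw [this] at h
        linarith [hc.1, hc.2]
      have himg : FC.image S (FC.comm a b) = ⁅FC.image S a, FC.image S b⁆ := rfl
      rw [himg, Subgroup.lowerCentralSeries_succ]
      rcases h2 with h2 | h2
      · exact Subgroup.commutator_mem_commutator (iha p h2) (Subgroup.mem_top _)
      · have : ⁅FC.image S a, FC.image S b⁆ = ⁅FC.image S b, FC.image S a⁆⁻¹ :=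
          (commutatorElement_inv _ _).symm
        rw [this]
        exact inv_mem (Subgroup.commutator_mem_commutator (ihb p h2) (Subgroup.mem_top _))

theorem wsub_le_lcs (S : Fin k → G) (w : Fin k → ℝ) (hw : ∀ i, 0 < w i)
    (M : ℝ) (hM : ∀ i, w i ≤ M) (a : ℝ) (p : ℕ) (h : M * 2 ^ p < a) :
    weightSubgroup S w a ≤ Subgroup.lowerCentralSeries (⊤ : Subgroup G) p := by
  rw [weightSubgroup]
  apply (Subgroup.closure_le _).mpr
  rintro g ⟨c, hc, rfl⟩
  exact image_mem_lcs S w hw M hM c p (h.trans_le hc)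

set_option maxHeartbeats 1000000 in
theorem pow_mul_mem (K : Subgroup G) (hK : ∀ x y : G, y ∈ K → x * y * x⁻¹ ∈ K)
    (x h : G) (hh : h ∈ K) :
    ∀ m : ℕ, ∃ h' ∈ K, (x * h) ^ m = x ^ m * h' := by
  intro m
  induction m with
  | zero => exact ⟨1, one_mem _, by simp⟩
  | succ m ih =>
    obtain ⟨h', hh', he⟩ := ih
    refine ⟨(x⁻¹ * h' * x⁻¹⁻¹) * h, mul_mem (hK x⁻¹ h' hh') hh, ?_⟩
    rw [pow_succ, he, pow_succ]
    group


section Main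

variable (S : Fin k → G) (w : Fin k → ℝ) (hw : ∀ i, 0 < w i)
  (M : ℝ) (hM : ∀ i, w i ≤ M) (n : ℕ) (hbot : Subgroup.lowerCentralSeries (⊤ : Subgroup G) n = ⊥)
  (m0 : ℝ) (hm0 : 0 < m0) (hm0le : ∀ c : FC k, m0 ≤ FC.weight w c)
  (htop : ∀ x : G, x ∈ weightSubgroup S w m0)

include hw hM hbot hm0 hm0le htop

theorem comm_mem_aux :
    ∀ d : ℕ, ∀ a b : ℝ, m0 ≤ a → m0 ≤ b → M * 2 ^ n < a + d * m0 →
      ∀ g ∈ weightSubgroup S w a, ∀ h ∈ weightSubgroup S w b,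
        ⁅g, h⁆ ∈ weightSubgroup S w (a + b) := by
  intro d
  induction d with
  | zero =>
    intro a b ha hb hbound g hg h hh
    have hg' : g ∈ Subgroup.lowerCentralSeries (⊤ : Subgroup G) n :=
      wsub_le_lcs S w hw M hM a n (by simpa using hbound) hg
    rw [hbot, Subgroup.mem_bot] at hg'
    subst hg'
    have : ⁅(1:G), h⁆ = 1 := by group
    rw [this]; exact one_mem _
  | succ d ih =>
    intro a b ha hb hbound
    have hconj : ∀ r : ℝ, m0 ≤ r → M * 2 ^ n < r + d * m0 →
        ∀ x y : G, y ∈ weightSubgroup S w r → x * y * x⁻¹ ∈ weightSubgroup S w r := by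
      intro r hr hrb x y hy
      have h1 : ⁅y⁻¹, x⁆ ∈ weightSubgroup S w (r + m0) :=
        ih r m0 hr le_rfl hrb y⁻¹ (inv_mem hy) x (htop x)
      have h2 : ⁅y⁻¹, x⁆ ∈ weightSubgroup S w r :=
        wsub_mono S w (le_add_of_nonneg_right hm0.le) h1
      have he : x * y * x⁻¹ = y * ⁅y⁻¹, x⁆ := by group
      rw [he]; exact mul_mem hy h2
    have hbound' : M * 2 ^ n < (a + b) + d * m0 := by
      have : a + (d + 1 : ℕ) * m0 = a + m0 + d * m0 := by push_cast; ring
      rw [this] at hbound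
      linarith
    have hab : m0 ≤ a + b := le_trans ha (by linarith)
    have key1 : ∀ h0 ∈ { g : G | ∃ c : FC k, b ≤ FC.weight w c ∧ FC.image S c = g },
        ∀ g ∈ weightSubgroup S w a, ⁅g, h0⁆ ∈ weightSubgroup S w (a + b) := by
      rintro h0 ⟨c2, hc2, rfl⟩ g hg
      rw [weightSubgroup] at hg
      induction hg using Subgroup.closure_induction with
      | mem x hx =>
        obtain ⟨c1, hc1, rfl⟩ := hx
        have : FC.image S (FC.comm c1 c2) ∈ weightSubgroup S w (a + b) :=
          image_mem S w _ (add_le_add hc1 hc2)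
        exact this
      | one =>
        have : ⁅(1:G), FC.image S c2⁆ = 1 := by group
        rw [this]; exact one_mem _
      | mul x y hx hy px py =>
        have he : ⁅x * y, FC.image S c2⁆ =
            x * ⁅y, FC.image S c2⁆ * x⁻¹ * ⁅x, FC.image S c2⁆ := by group
        rw [he]
        exact mul_mem (hconj (a + b) hab hbound' x _ py) px
      | inv x hx px =>
        have he : ⁅x⁻¹, FC.image S c2⁆ = x⁻¹ * ⁅x, FC.image S c2⁆⁻¹ * x⁻¹⁻¹ := by group
        rw [he]
        exact hconj (a + b) hab hbound' x⁻¹ _ (inv_mem px)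
    intro g hg h hh
    rw [weightSubgroup] at hh
    induction hh using Subgroup.closure_induction with
    | mem x hx => exact key1 x hx g hg
    | one =>
      have : ⁅g, (1:G)⁆ = 1 := by group
      rw [this]; exact one_mem _
    | mul x y hx hy px py =>
      have he : ⁅g, x * y⁆ = ⁅g, x⁆ * (x * ⁅g, y⁆ * x⁻¹) := by group
      rw [he]
      exact mul_mem px (hconj (a + b) hab hbound' x _ py)
    | inv x hx px =>
      have he : ⁅g, x⁻¹⁆ = x⁻¹ * ⁅g, x⁆⁻¹ * x⁻¹⁻¹ := by group
      rw [he]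
      exact hconj (a + b) hab hbound' x⁻¹ _ (inv_mem px)

theorem comm_mem :
    ∀ a b : ℝ, m0 ≤ a → m0 ≤ b →
      ∀ g ∈ weightSubgroup S w a, ∀ h ∈ weightSubgroup S w b,
        ⁅g, h⁆ ∈ weightSubgroup S w (a + b) := by
  intro a b ha hb
  obtain ⟨d, hd⟩ := exists_nat_gt ((M * 2 ^ n - a) / m0)
  have hd' : M * 2 ^ n < a + d * m0 := by
    have := (div_lt_iff₀ hm0).mp hd
    linarith
  exact comm_mem_aux S w hw M hM n hbot m0 hm0 hm0le htop d a b ha hb hd'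

theorem conj_mem :
    ∀ r : ℝ, m0 ≤ r → ∀ x y : G, y ∈ weightSubgroup S w r →
      x * y * x⁻¹ ∈ weightSubgroup S w r := by
  intro r hr x y hy
  have h1 : ⁅y⁻¹, x⁆ ∈ weightSubgroup S w (r + m0) :=
    comm_mem S w hw M hM n hbot m0 hm0 hm0le htop r m0 hr le_rfl y⁻¹ (inv_mem hy) x (htop x)
  have h2 : ⁅y⁻¹, x⁆ ∈ weightSubgroup S w r :=
    wsub_mono S w (le_add_of_nonneg_right hm0.le) h1
  have he : x * y * x⁻¹ = y * ⁅y⁻¹, x⁆ := by group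
  rw [he]; exact mul_mem hy h2

theorem comm_pow_left (p q : ℝ) (hp : m0 ≤ p) (hq : m0 ≤ q)
    (A B : G) (hA : A ∈ weightSubgroup S w p) (hB : B ∈ weightSubgroup S w q) :
    ∀ m : ℕ, ∃ h ∈ weightSubgroup S w (p + q + m0), ⁅A ^ m, B⁆ = ⁅A, B⁆ ^ m * h := by
  have hcm := comm_mem S w hw M hM n hbot m0 hm0 hm0le htop
  have hconj := conj_mem S w hw M hM n hbot m0 hm0 hm0le htop
  have hpq : m0 ≤ p + q + m0 := by linarith
  have hC : ⁅A, B⁆ ∈ weightSubgroup S w (p + q) := hcm p q hp hq A hA B hB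
  intro m
  induction m with
  | zero => exact ⟨1, one_mem _, by simp⟩
  | succ m ih =>
    obtain ⟨h, hh, he⟩ := ih
    set C := ⁅A, B⁆ with hCdef
    have hmem1 : ⁅(C ^ m)⁻¹, A⁆ ∈ weightSubgroup S w (p + q + m0) := by
      have : ⁅(C ^ m)⁻¹, A⁆ ∈ weightSubgroup S w ((p + q) + p) :=
        hcm (p + q) p (by linarith) hp _ (inv_mem (pow_mem hC m)) A hA
      exact wsub_mono S w (by linarith) this
    have hX : (C ^ m)⁻¹ * (A * C ^ m * A⁻¹) ∈ weightSubgroup S w (p + q + m0) := by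
      have : ⁅(C ^ m)⁻¹, A⁆ = (C ^ m)⁻¹ * (A * C ^ m * A⁻¹) := by group
      rw [← this]; exact hmem1
    refine ⟨C⁻¹ * (((C ^ m)⁻¹ * (A * C ^ m * A⁻¹)) * (A * h * A⁻¹)) * C⁻¹⁻¹, ?_, ?_⟩
    · exact hconj _ hpq C⁻¹ _ (mul_mem hX (hconj _ hpq A h hh))
    · have hid : ⁅A ^ (m+1), B⁆ = A * ⁅A ^ m, B⁆ * A⁻¹ * ⁅A, B⁆ := by
        rw [pow_succ']
        group
      rw [hid, he, ← hCdef]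
      rw [pow_succ]
      group

theorem comm_pow_right (p q : ℝ) (hp : m0 ≤ p) (hq : m0 ≤ q)
    (A B : G) (hA : A ∈ weightSubgroup S w p) (hB : B ∈ weightSubgroup S w q) :
    ∀ m : ℕ, ∃ h ∈ weightSubgroup S w (p + q + m0), ⁅A, B ^ m⁆ = ⁅A, B⁆ ^ m * h := by
  have hcm := comm_mem S w hw M hM n hbot m0 hm0 hm0le htop
  have hconj := conj_mem S w hw M hM n hbot m0 hm0 hm0le htop
  have hpq : m0 ≤ p + q + m0 := by linarith
  have hC : ⁅A, B⁆ ∈ weightSubgroup S w (p + q) := hcm p q hp hq A hA B hB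
  intro m
  induction m with
  | zero => exact ⟨1, one_mem _, by simp⟩
  | succ m ih =>
    obtain ⟨h, hh, he⟩ := ih
    set C := ⁅A, B⁆ with hCdef
    have hX : (C ^ m)⁻¹ * (B * C ^ m * B⁻¹) ∈ weightSubgroup S w (p + q + m0) := by
      have h1 : ⁅(C ^ m)⁻¹, B⁆ ∈ weightSubgroup S w ((p + q) + q) :=
        hcm (p + q) q (by linarith) hq _ (inv_mem (pow_mem hC m)) B hB
      have h2 := wsub_mono S w (show p + q + m0 ≤ (p + q) + q by linarith) h1
      have : ⁅(C ^ m)⁻¹, B⁆ = (C ^ m)⁻¹ * (B * C ^ m * B⁻¹) := by group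
      rw [← this]; exact h2
    refine ⟨((C ^ m)⁻¹ * (B * C ^ m * B⁻¹)) * (B * h * B⁻¹), ?_, ?_⟩
    · exact mul_mem hX (hconj _ hpq B h hh)
    · have hid : ⁅A, B ^ (m+1)⁆ = ⁅A, B⁆ * (B * ⁅A, B ^ m⁆ * B⁻¹) := by
        rw [pow_succ']
        group
      rw [hid, he, ← hCdef, pow_succ']
      group

theorem image_update_mem (i : Fin k) (u : ℕ) :
    ∀ c : FC k, FC.image (Function.update S i (S i ^ u)) c ∈
      weightSubgroup S w (FC.weight w c) := by
  have hcm := comm_mem S w hw M hM n hbot m0 hm0 hm0le htop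
  intro c
  induction c with
  | gen i' b =>
    have hSi : S i ∈ weightSubgroup S w (w i) := by
      have := image_mem S w (FC.gen i true) (le_refl (w i))
      simpa [FC.image] using this
    by_cases h : i' = i
    · subst h
      cases b with
      | true =>
        show Function.update S i' (S i' ^ u) i' ∈ _
        rw [Function.update_self]
        exact pow_mem hSi u
      | false =>
        show (Function.update S i' (S i' ^ u) i')⁻¹ ∈ _
        rw [Function.update_self]
        exact inv_mem (pow_mem hSi u)
    · have hSi' : S i' ∈ weightSubgroup S w (w i') := by
        have := image_mem S w (FC.gen i' true) (le_refl (w i'))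
        simpa [FC.image] using this
      cases b with
      | true =>
        show Function.update S i (S i ^ u) i' ∈ _
        rw [Function.update_of_ne h]
        exact hSi'
      | false =>
        show (Function.update S i (S i ^ u) i')⁻¹ ∈ _
        rw [Function.update_of_ne h]
        exact inv_mem hSi'
  | comm a b iha ihb =>
    exact hcm (FC.weight w a) (FC.weight w b) (hm0le a) (hm0le b) _ iha _ ihb

set_option maxHeartbeats 1000000 in
theorem image_update_congr (i : Fin k) (u : ℕ) :
    ∀ c : FC k, ∃ h ∈ weightSubgroup S w (FC.weight w c + m0),
      FC.image (Function.update S i (S i ^ u)) c =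
        FC.image S c ^ (u ^ ((FC.letters c).count i)) * h := by
  have hcm := comm_mem S w hw M hM n hbot m0 hm0 hm0le htop
  have hconj := conj_mem S w hw M hM n hbot m0 hm0 hm0le htop
  intro c
  induction c with
  | gen i' b =>
    refine ⟨1, one_mem _, ?_⟩
    rw [mul_one]
    by_cases h : i' = i
    · subst h
      have hcnt : (FC.letters (FC.gen i' b)).count i' = 1 := by
        simp [FC.letters]
      rw [hcnt, pow_one]
      cases b with
      | true =>
        show Function.update S i' (S i' ^ u) i' = (S i') ^ u
        rw [Function.update_self]
      | false =>
        show (Function.update S i' (S i' ^ u) i')⁻¹ = ((S i')⁻¹) ^ u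
        rw [Function.update_self, inv_pow]
    · have hcnt : (FC.letters (FC.gen i' b)).count i = 0 := by
        show List.count i [i'] = 0
        rw [List.count_eq_zero]
        simp only [List.mem_singleton]
        exact fun hc => h hc.symm
      rw [hcnt, pow_zero, pow_one]
      cases b with
      | true =>
        show Function.update S i (S i ^ u) i' = S i'
        rw [Function.update_of_ne h]
      | false =>
        show (Function.update S i (S i ^ u) i')⁻¹ = (S i')⁻¹
        rw [Function.update_of_ne h]
  | comm a b iha ihb =>
    obtain ⟨ha, hma, hea⟩ := iha
    obtain ⟨hb, hmb, heb⟩ := ihb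
    have hwa := hm0le a
    have hwb := hm0le b
    have hwa0 := weight_pos w hw a
    have hwb0 := weight_pos w hw b
    have hK : m0 ≤ FC.weight w a + FC.weight w b + m0 := by linarith
    have hAmem : FC.image S a ∈ weightSubgroup S w (FC.weight w a) := image_mem S w a le_rfl
    have hBmem : FC.image S b ∈ weightSubgroup S w (FC.weight w b) := image_mem S w b le_rfl
    have hB'mem : FC.image S b ^ (u ^ ((FC.letters b).count i)) * hb ∈
        weightSubgroup S w (FC.weight w b) := by
      rw [← heb]
      exact image_update_mem S w hw M hM n hbot m0 hm0 hm0le htop i u b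
    -- abbreviations
    set A := FC.image S a with hAdef
    set B := FC.image S b with hBdef
    set ua := u ^ ((FC.letters a).count i) with huadef
    set ub := u ^ ((FC.letters b).count i) with hubdef
    set C := ⁅A, B⁆ with hCdef
    set K := weightSubgroup S w (FC.weight w a + FC.weight w b + m0) with hKdef
    -- the correction terms
    obtain ⟨h3, hm3, he3⟩ := comm_pow_left S w hw M hM n hbot m0 hm0 hm0le htop
      (FC.weight w a) (FC.weight w b) hwa hwb A (B ^ ub) hAmem (pow_mem hBmem ub) ua
    obtain ⟨h4, hm4, he4⟩ := comm_pow_right S w hw M hM n hbot m0 hm0 hm0le htop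
      (FC.weight w a) (FC.weight w b) hwa hwb A B hAmem hBmem ub
    have hKconj : ∀ x y : G, y ∈ K → x * y * x⁻¹ ∈ K := fun x y hy => hconj _ hK x y hy
    obtain ⟨h5, hm5, he5⟩ := pow_mul_mem K hKconj (C ^ ub) h4 hm4 ua
    -- t1 : conjugated ⁅ha, B'⁆ term
    have ht1 : A ^ ua * ⁅ha, B ^ ub * hb⁆ * (A ^ ua)⁻¹ ∈ K := by
      apply hKconj
      have h1 : ⁅ha, B ^ ub * hb⁆ ∈
          weightSubgroup S w ((FC.weight w a + m0) + FC.weight w b) :=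
        hcm (FC.weight w a + m0) (FC.weight w b) (by linarith) hwb ha hma _ hB'mem
      exact wsub_mono S w (by linarith) h1
    -- t2 : conjugated ⁅A^ua, hb⁆ term
    have ht2 : B ^ ub * ⁅A ^ ua, hb⁆ * (B ^ ub)⁻¹ ∈ K := by
      apply hKconj
      have h1 : ⁅A ^ ua, hb⁆ ∈
          weightSubgroup S w (FC.weight w a + (FC.weight w b + m0)) :=
        hcm (FC.weight w a) (FC.weight w b + m0) hwa (by linarith) _ (pow_mem hAmem ua) hb hmb
      exact wsub_mono S w (by linarith) h1
    -- value of ⁅A^ua, B^ub⁆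
    have hZ : ⁅A ^ ua, B ^ ub⁆ = C ^ (ub * ua) * (h5 * h3) := by
      rw [he3, he4, he5, ← pow_mul, mul_assoc]
    -- main membership
    have key : (C ^ (ub * ua))⁻¹ * ⁅A ^ ua * ha, B ^ ub * hb⁆ ∈ K := by
      have e1 : (C ^ (ub * ua))⁻¹ * ⁅A ^ ua * ha, B ^ ub * hb⁆ =
          ((C ^ (ub * ua))⁻¹ * (A ^ ua * ⁅ha, B ^ ub * hb⁆ * (A ^ ua)⁻¹) *
            ((C ^ (ub * ua))⁻¹)⁻¹) *
          ((C ^ (ub * ua))⁻¹ * ⁅A ^ ua, B ^ ub * hb⁆) := by group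
      rw [e1]
      refine mul_mem (hKconj _ _ ht1) ?_
      have e2 : (C ^ (ub * ua))⁻¹ * ⁅A ^ ua, B ^ ub * hb⁆ =
          (C ^ (ub * ua))⁻¹ * ⁅A ^ ua, B ^ ub⁆ * (B ^ ub * ⁅A ^ ua, hb⁆ * (B ^ ub)⁻¹) := by
        group
      rw [e2, hZ]
      have e3 : (C ^ (ub * ua))⁻¹ * (C ^ (ub * ua) * (h5 * h3)) = h5 * h3 := by group
      rw [e3]
      exact mul_mem (mul_mem hm5 hm3) ht2
    -- conclude
    have hN : u ^ ((FC.letters (FC.comm a b)).count i) = ub * ua := by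
      show u ^ ((FC.letters a ++ FC.letters b).count i) = ub * ua
      rw [List.count_append, pow_add, huadef, hubdef, mul_comm]
    refine ⟨(C ^ (ub * ua))⁻¹ *
      ⁅FC.image (Function.update S i (S i ^ u)) a,
        FC.image (Function.update S i (S i ^ u)) b⁆, ?_, ?_⟩
    · show _ ∈ weightSubgroup S w (FC.weight w a + FC.weight w b + m0)
      rw [hea, heb]
      exact key
    · show ⁅FC.image (Function.update S i (S i ^ u)) a,
        FC.image (Function.update S i (S i ^ u)) b⁆ = _
      rw [hN]
      show _ = C ^ (ub * ua) * ((C ^ (ub * ua))⁻¹ * _)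
      group

theorem image_update_mem_of_mem (i : Fin k) (u : ℕ) (t : ℝ) (hti : w i ≤ t)
    (ht : S i ^ u ∈ weightSubgroup S w t) :
    ∀ c : FC k, i ∈ FC.letters c →
      FC.image (Function.update S i (S i ^ u)) c ∈
        weightSubgroup S w (FC.weight w c + (t - w i)) := by
  have hcm := comm_mem S w hw M hM n hbot m0 hm0 hm0le htop
  intro c
  induction c with
  | gen i' b =>
    intro hmem
    have : i = i' := by simpa [FC.letters] using hmem
    subst this
    have hteq : FC.weight w (FC.gen i b) + (t - w i) = t := by
      show w i + (t - w i) = t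
      ring
    rw [hteq]
    cases b with
    | true =>
      show Function.update S i (S i ^ u) i ∈ _
      rw [Function.update_self]
      exact ht
    | false =>
      show (Function.update S i (S i ^ u) i)⁻¹ ∈ _
      rw [Function.update_self]
      exact inv_mem ht
  | comm a b iha ihb =>
    intro hmem
    have hwa := hm0le a
    have hwb := hm0le b
    rcases List.mem_append.mp hmem with h | h
    · have h1 := iha h
      have h2 := image_update_mem S w hw M hM n hbot m0 hm0 hm0le htop i u b
      have h3 := hcm (FC.weight w a + (t - w i)) (FC.weight w b)
        (by linarith) hwb _ h1 _ h2
      have heq : FC.weight w (FC.comm a b) + (t - w i) =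
          (FC.weight w a + (t - w i)) + FC.weight w b := by
        show FC.weight w a + FC.weight w b + (t - w i) = _
        ring
      rw [heq]
      exact h3
    · have h1 := ihb h
      have h2 := image_update_mem S w hw M hM n hbot m0 hm0 hm0le htop i u a
      have h3 := hcm (FC.weight w a) (FC.weight w b + (t - w i))
        hwa (by linarith) _ h2 _ h1
      have heq : FC.weight w (FC.comm a b) + (t - w i) =
          FC.weight w a + (FC.weight w b + (t - w i)) := by
        show FC.weight w a + FC.weight w b + (t - w i) = _
        ring
      rw [heq]
      exact h3

end Main

end St10

/-- Let `G` be a nilpotent group generated by `S` with weight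
system `𝔴` and filtration `G^𝔴_j` (thresholds given by the increasing
enumeration `wbar` of the weight values).  If `c` is a formal commutator of
weight `w̄_j` whose image projects to a non-torsion element of
`G^𝔴_j/G^𝔴_{j+1}` (i.e. no positive power of its image lies in `G^𝔴_{j+1}`),
then every letter `s_i` in the build-word of `c` satisfies
`w(s_i) = w̄_{j_𝔴(s_i)}`; that is, `c` only uses letters in the core of `(𝔴,S)`. -/
theorem statement10 {k : ℕ} {G : Type*} [Group G] [Group.IsNilpotent G]
    (S : Fin k → G) (hS : Subgroup.closure (Set.range S) = ⊤)
    (w : Fin k → ℝ) (hw : ∀ i, 0 < w i)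
    (wbar : ℕ → ℝ) (hmono : StrictMono wbar)
    (hrange : Set.range wbar = { x | ∃ c : FC k, FC.weight w c = x })
    (c : FC k) (j : ℕ) (hcw : FC.weight w c = wbar j)
    (hfree : ∀ u : ℕ, 0 < u → (FC.image S c) ^ u ∉ weightSubgroup S w (wbar (j + 1))) :
    ∀ i ∈ FC.letters c, w i = wbar (jIndex S w wbar (S i)) := by
  classical
  intro i hi
  haveI : Nonempty (Fin k) := ⟨i⟩
  -- constants
  set M := Finset.univ.sup' Finset.univ_nonempty w with hMdef
  have hM : ∀ i', w i' ≤ M := fun i' => Finset.le_sup' w (Finset.mem_univ i')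
  set m0 := wbar 0 with hm0def
  have hm0le : ∀ c' : FC k, m0 ≤ FC.weight w c' := by
    intro c'
    have : FC.weight w c' ∈ Set.range wbar := by
      rw [hrange]; exact ⟨c', rfl⟩
    obtain ⟨j₀, hj₀⟩ := this
    rw [← hj₀]
    exact hmono.monotone (Nat.zero_le _)
  have hm0 : 0 < m0 := by
    have : m0 ∈ { x | ∃ c' : FC k, FC.weight w c' = x } := by
      rw [← hrange]; exact ⟨0, rfl⟩
    obtain ⟨c₀, hc₀⟩ := this
    rw [← hc₀]
    exact St10.weight_pos w hw c₀
  have htop : ∀ x : G, x ∈ weightSubgroup S w m0 := by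
    intro x
    have hle : Subgroup.closure (Set.range S) ≤ weightSubgroup S w m0 := by
      apply (Subgroup.closure_le _).mpr
      rintro g ⟨i', rfl⟩
      have := St10.image_mem S w (FC.gen i' true) (hm0le (FC.gen i' true))
      simpa [FC.image] using this
    exact hle (by rw [hS]; trivial)
  obtain ⟨n, hbot⟩ := nilpotent_iff_lowerCentralSeries.mp ‹Group.IsNilpotent G›
  -- the "next threshold" lemma
  have next_le : ∀ x : ℝ, wbar j < x →
      weightSubgroup S w x ≤ weightSubgroup S w (wbar (j + 1)) := by
    intro x hx
    apply Subgroup.closure_mono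
    rintro g ⟨c', hc', rfl⟩
    have hwc : FC.weight w c' ∈ Set.range wbar := by
      rw [hrange]; exact ⟨c', rfl⟩
    obtain ⟨j₀, hj₀⟩ := hwc
    have : wbar j < wbar j₀ := by rw [hj₀]; linarith
    have hj₀' : j + 1 ≤ j₀ := hmono.lt_iff_lt.mp this
    exact ⟨c', by rw [← hj₀]; exact hmono.monotone hj₀', rfl⟩
  -- the key step: no positive power of S i lies deeper than w i
  have KL : ∀ t : ℝ, w i < t → ∀ u : ℕ, 0 < u → S i ^ u ∈ weightSubgroup S w t → False := by
    intro t hti u hu hmem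
    have hcnt : 0 < (FC.letters c).count i := List.count_pos_iff.mpr hi
    apply hfree (u ^ (FC.letters c).count i) (Nat.pow_pos hu)
    obtain ⟨h, hh, he⟩ := St10.image_update_congr S w hw M hM n hbot m0 hm0 hm0le htop i u c
    have h1 := St10.image_update_mem_of_mem S w hw M hM n hbot m0 hm0 hm0le htop
      i u t hti.le hmem c hi
    rw [hcw] at h1 hh
    have h1' : FC.image (Function.update S i (S i ^ u)) c ∈
        weightSubgroup S w (wbar (j + 1)) :=
      next_le _ (by linarith) h1
    have hh' : h ∈ weightSubgroup S w (wbar (j + 1)) :=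
      next_le _ (by linarith) hh
    have : FC.image S c ^ u ^ (FC.letters c).count i =
        FC.image (Function.update S i (S i ^ u)) c * h⁻¹ := by
      rw [he]; group
    rw [this]
    exact mul_mem h1' (inv_mem hh')
  -- compute jIndex
  obtain ⟨j', hj'⟩ : w i ∈ Set.range wbar := by
    rw [hrange]; exact ⟨FC.gen i true, rfl⟩
  have hSJmem : j' ∈ { jx : ℕ | ∃ u : ℕ, 0 < u ∧ S i ^ u ∈ weightSubgroup S w (wbar jx) } := by
    refine ⟨1, one_pos, ?_⟩
    rw [pow_one]
    have := St10.image_mem S w (FC.gen i true) (le_of_eq hj')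
    simpa [FC.image] using this
  have hub : ∀ jx ∈ { jx : ℕ | ∃ u : ℕ, 0 < u ∧ S i ^ u ∈ weightSubgroup S w (wbar jx) },
      jx ≤ j' := by
    rintro jx ⟨u, hu, hx⟩
    by_contra hlt
    push_neg at hlt
    have : w i < wbar jx := by rw [← hj']; exact hmono hlt
    exact KL (wbar jx) this u hu hx
  have hjI : jIndex S w wbar (S i) = j' := by
    rw [jIndex]
    exact le_antisymm (csSup_le ⟨j', hSJmem⟩ hub) (le_csSup ⟨j', hub⟩ hSJmem)
  rw [hjI, hj']
end

section
/- Let G be the discrete Heisenberg group with generating triple S = (X, Y, Z) (elementary matrices as usual) and parameters a = (α_1, α_2, α_3) with α_1, α_2 ∈ (0,2) and α_3 ∈ (0,2). Let 𝔴 assign weights w_i = 1/α_i. Then D(S,𝔴) = 1/α_1 + 1/α_2 + max{1/α_1 + 1/α_2, 1/α_3}, where D(S,𝔴) = Σ_j w̄_j · rank(G^𝔴_j/G^𝔴_{j+1}). -/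
/-- The discrete Heisenberg group as triples of integers. -/
@[ext] structure Heis : Type where
  x : ℤ
  y : ℤ
  z : ℤ
  deriving DecidableEq

namespace Heis

instance : Mul Heis := ⟨fun a b => ⟨a.x + b.x, a.y + b.y, a.z + b.z + a.x * b.y⟩⟩
instance : One Heis := ⟨⟨0, 0, 0⟩⟩
instance : Inv Heis := ⟨fun a => ⟨-a.x, -a.y, -a.z + a.x * a.y⟩⟩

lemma mul_def (a b : Heis) :
    a * b = ⟨a.x + b.x, a.y + b.y, a.z + b.z + a.x * b.y⟩ := rfl
lemma one_def : (1 : Heis) = ⟨0, 0, 0⟩ := rfl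
lemma inv_def (a : Heis) : a⁻¹ = ⟨-a.x, -a.y, -a.z + a.x * a.y⟩ := rfl

instance : Group Heis where
  mul_assoc a b c := by
    simp only [mul_def, mk.injEq]; refine ⟨by ring, by ring, by ring⟩
  one_mul a := by simp [mul_def, one_def]
  mul_one a := by simp [mul_def, one_def]
  inv_mul_cancel a := by
    simp only [mul_def, inv_def, one_def, mk.injEq]
    refine ⟨by ring, by ring, by ring⟩

def X : Heis := ⟨1, 0, 0⟩
def Y : Heis := ⟨0, 1, 0⟩
def Z : Heis := ⟨0, 0, 1⟩

end Heis

open scoped commutatorElement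

/-- The torsion-free rank of `A/B` for subgroups `B ≤ A`. -/
noncomputable def tfRank {G : Type*} [Group G] (A B : Subgroup G) : ℕ :=
  sSup { n : ℕ | ∃ f : Fin n → G, (∀ i, f i ∈ A) ∧
    ∀ x : Fin n → ℤ, (List.ofFn (fun i => f i ^ x i)).prod ∈ B → ∀ i, x i = 0 }

/-- The set of weight values. -/
def weightVals {k : ℕ} (w : Fin k → ℝ) : Set ℝ :=
  Set.range (FC.weight w)

/-- The next weight value after `t`. -/
noncomputable def nextVal {k : ℕ} (w : Fin k → ℝ) (t : ℝ) : ℝ :=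
  sInf { x ∈ weightVals w | t < x }

/-- `D(S,𝔴) = Σ_j w̄_j rank(G^𝔴_j/G^𝔴_{j+1})`. -/
noncomputable def Dval {k : ℕ} {G : Type*} [Group G] (S : Fin k → G)
    (w : Fin k → ℝ) : ℝ :=
  ∑' t : (weightVals w), (t : ℝ) *
    (tfRank (weightSubgroup S w t) (weightSubgroup S w (nextVal w t)) : ℝ)

namespace Heis

-- commutator formula
lemma comm_eq (a b : Heis) : ⁅a, b⁆ = ⟨0, 0, a.x * b.y - a.y * b.x⟩ := by
  simp only [commutatorElement_def, mul_def, inv_def, mk.injEq]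
  refine ⟨by ring, by ring, by ring⟩

-- zpow homs
private def ψX : Multiplicative ℤ →* Heis where
  toFun n := ⟨n.toAdd, 0, 0⟩
  map_one' := rfl
  map_mul' a b := by simp only [mul_def, toAdd_mul, mk.injEq]; exact ⟨trivial, by ring, by ring⟩

private def ψY : Multiplicative ℤ →* Heis where
  toFun n := ⟨0, n.toAdd, 0⟩
  map_one' := rfl
  map_mul' a b := by simp only [mul_def, toAdd_mul, mk.injEq]; exact ⟨by ring, trivial, by ring⟩

private def ψZ : Multiplicative ℤ →* Heis where
  toFun n := ⟨0, 0, n.toAdd⟩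
  map_one' := rfl
  map_mul' a b := by simp only [mul_def, toAdd_mul, mk.injEq]; exact ⟨by ring, by ring, by ring⟩

lemma X_zpow (n : ℤ) : X ^ n = ⟨n, 0, 0⟩ := by
  have h : X = ψX (Multiplicative.ofAdd 1) := rfl
  rw [h, ← map_zpow]
  show ψX (Multiplicative.ofAdd 1 ^ n) = _
  rw [← ofAdd_zsmul]
  simp [ψX]

lemma Y_zpow (n : ℤ) : Y ^ n = ⟨0, n, 0⟩ := by
  have h : Y = ψY (Multiplicative.ofAdd 1) := rfl
  rw [h, ← map_zpow]
  show ψY (Multiplicative.ofAdd 1 ^ n) = _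
  rw [← ofAdd_zsmul]
  simp [ψY]

lemma Z_zpow (n : ℤ) : Z ^ n = ⟨0, 0, n⟩ := by
  have h : Z = ψZ (Multiplicative.ofAdd 1) := rfl
  rw [h, ← map_zpow]
  show ψZ (Multiplicative.ofAdd 1 ^ n) = _
  rw [← ofAdd_zsmul]
  simp [ψZ]

-- coordinate homs
def φx : Heis →* Multiplicative ℤ where
  toFun a := Multiplicative.ofAdd a.x
  map_one' := rfl
  map_mul' a b := rfl

def φy : Heis →* Multiplicative ℤ where
  toFun a := Multiplicative.ofAdd a.y
  map_one' := rfl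
  map_mul' a b := rfl

lemma zpow_x (a : Heis) (n : ℤ) : (a ^ n).x = n * a.x := by
  have : (a ^ n).x = (φx (a ^ n)).toAdd := rfl
  rw [this, map_zpow]
  show (Multiplicative.ofAdd a.x ^ n).toAdd = n * a.x
  rw [← ofAdd_zsmul]
  simp [mul_comm]

lemma zpow_y (a : Heis) (n : ℤ) : (a ^ n).y = n * a.y := by
  have : (a ^ n).y = (φy (a ^ n)).toAdd := rfl
  rw [this, map_zpow]
  show (Multiplicative.ofAdd a.y ^ n).toAdd = n * a.y
  rw [← ofAdd_zsmul]
  simp [mul_comm]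

lemma central_zpow (a : Heis) (hx : a.x = 0) (hy : a.y = 0) (n : ℤ) :
    a ^ n = ⟨0, 0, n * a.z⟩ := by
  have ha : a = Z ^ a.z := by rw [Z_zpow]; ext <;> simp [hx, hy]
  conv_lhs => rw [ha, ← zpow_mul, Z_zpow]
  rw [mul_comm]

lemma decomp (g : Heis) : g = X ^ g.x * Y ^ g.y * Z ^ (g.z - g.x * g.y) := by
  rw [X_zpow, Y_zpow, Z_zpow]
  simp only [mul_def]
  ext <;> simp <;> ring

end Heis

namespace Heis

def sXZ : Subgroup Heis where
  carrier := {a | a.y = 0}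
  mul_mem' ha hb := by simp_all [mul_def]
  one_mem' := rfl
  inv_mem' ha := by simp_all [inv_def]

def sYZ : Subgroup Heis where
  carrier := {a | a.x = 0}
  mul_mem' ha hb := by simp_all [mul_def]
  one_mem' := rfl
  inv_mem' ha := by simp_all [inv_def]

def sC : Subgroup Heis where
  carrier := {a | a.x = 0 ∧ a.y = 0}
  mul_mem' ha hb := by simp_all [mul_def]
  one_mem' := ⟨rfl, rfl⟩
  inv_mem' ha := by simp_all [inv_def]

lemma mem_sXZ {a : Heis} : a ∈ sXZ ↔ a.y = 0 := Iff.rfl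
lemma mem_sYZ {a : Heis} : a ∈ sYZ ↔ a.x = 0 := Iff.rfl
lemma mem_sC {a : Heis} : a ∈ sC ↔ a.x = 0 ∧ a.y = 0 := Iff.rfl

-- product coordinate lemmas
lemma prod_x : ∀ (l : List Heis), l.prod.x = (l.map Heis.x).sum
  | [] => rfl
  | a :: l => by simp [List.prod_cons, mul_def, prod_x l]

lemma prod_y : ∀ (l : List Heis), l.prod.y = (l.map Heis.y).sum
  | [] => rfl
  | a :: l => by simp [List.prod_cons, mul_def, prod_y l]

lemma prod_central : ∀ (l : List Heis), (∀ a ∈ l, a.x = 0 ∧ a.y = 0) →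
    l.prod = ⟨0, 0, (l.map Heis.z).sum⟩
  | [], _ => rfl
  | a :: l, h => by
      have ha := h a List.mem_cons_self
      have hl := prod_central l (fun b hb => h b (List.mem_cons_of_mem a hb))
      simp [List.prod_cons, mul_def, hl, ha.1, ha.2]

lemma ofFn_prod_x {n : ℕ} (f : Fin n → Heis) (c : Fin n → ℤ) :
    ((List.ofFn fun i => f i ^ c i).prod).x = ∑ i, c i * (f i).x := by
  rw [prod_x, List.map_ofFn, List.sum_ofFn]
  exact Finset.sum_congr rfl fun i _ => zpow_x _ _

lemma ofFn_prod_y {n : ℕ} (f : Fin n → Heis) (c : Fin n → ℤ) :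
    ((List.ofFn fun i => f i ^ c i).prod).y = ∑ i, c i * (f i).y := by
  rw [prod_y, List.map_ofFn, List.sum_ofFn]
  exact Finset.sum_congr rfl fun i _ => zpow_y _ _

lemma ofFn_prod_central {n : ℕ} (f : Fin n → Heis) (c : Fin n → ℤ)
    (h : ∀ i, (f i).x = 0 ∧ (f i).y = 0) :
    (List.ofFn fun i => f i ^ c i).prod = ⟨0, 0, ∑ i, c i * (f i).z⟩ := by
  rw [prod_central]
  · congr 1
    rw [List.map_ofFn, List.sum_ofFn]
    refine Finset.sum_congr rfl fun i _ => ?_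
    show (f i ^ c i).z = c i * (f i).z
    rw [central_zpow _ (h i).1 (h i).2]
  · intro a ha
    rw [List.mem_ofFn] at ha
    obtain ⟨i, rfl⟩ := ha
    show (f i ^ c i).x = 0 ∧ (f i ^ c i).y = 0
    rw [central_zpow _ (h i).1 (h i).2]
    exact ⟨rfl, rfl⟩

end Heis

open Heis

/-- The target subgroup at threshold `t`. -/
noncomputable def T (w1 w2 wz t : ℝ) : Subgroup Heis :=
  if t ≤ w1 then (if t ≤ w2 then ⊤ else sXZ)
  else if t ≤ w2 then sYZ
  else if t ≤ wz then sC else ⊥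

lemma X_mem_T {w1 w2 wz t : ℝ} (h : t ≤ w1) : X ∈ T w1 w2 wz t := by
  unfold T; split_ifs with h1 h2 <;> first | trivial | exact (h1 h).elim

lemma Y_mem_T {w1 w2 wz t : ℝ} (h : t ≤ w2) : Y ∈ T w1 w2 wz t := by
  unfold T; split_ifs with h1 h2 h3 <;>
    first | trivial | exact (h2 h).elim | exact (h3 h).elim

lemma central_mem_T {w1 w2 wz t : ℝ} (c : ℤ) (h : t ≤ wz) :
    (⟨0, 0, c⟩ : Heis) ∈ T w1 w2 wz t := by
  unfold T; split_ifs with h1 h2 h3 h4 <;>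
    first | trivial | exact ⟨rfl, rfl⟩ | exact (h4 h).elim

lemma weight_pos {k : ℕ} {w : Fin k → ℝ} (hw : ∀ i, 0 < w i) :
    ∀ c : FC k, 0 < FC.weight w c
  | .gen i _ => hw i
  | .comm a b => add_pos (weight_pos hw a) (weight_pos hw b)

section Char

variable {w1 w2 w3 : ℝ}

lemma image_x_ne {c : FC 3} (h : ((FC.image ![X, Y, Z] c)).x ≠ 0) :
    FC.weight ![w1, w2, w3] c = w1 := by
  cases c with
  | gen i b =>
      fin_cases i <;> cases b <;>
        simp_all [FC.image, FC.weight, X, Y, Z, inv_def]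
  | comm a b =>
      exfalso; apply h
      show (⁅FC.image ![X,Y,Z] a, FC.image ![X,Y,Z] b⁆).x = 0
      rw [comm_eq]

lemma image_y_ne {c : FC 3} (h : ((FC.image ![X, Y, Z] c)).y ≠ 0) :
    FC.weight ![w1, w2, w3] c = w2 := by
  cases c with
  | gen i b =>
      fin_cases i <;> cases b <;>
        simp_all [FC.image, FC.weight, X, Y, Z, inv_def]
  | comm a b =>
      exfalso; apply h
      show (⁅FC.image ![X,Y,Z] a, FC.image ![X,Y,Z] b⁆).y = 0
      rw [comm_eq]

theorem wsub_eq (h1 : 0 < w1) (h2 : 0 < w2) (h3 : 0 < w3) (t : ℝ) :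
    weightSubgroup ![X, Y, Z] ![w1, w2, w3] t = T w1 w2 (max (w1 + w2) w3) t := by
  apply le_antisymm
  · rw [weightSubgroup, Subgroup.closure_le]
    rintro g ⟨c, hc, rfl⟩
    cases c with
    | gen i b =>
        fin_cases i <;> cases b
        · exact (T _ _ _ _).inv_mem (X_mem_T hc)
        · exact X_mem_T hc
        · exact (T _ _ _ _).inv_mem (Y_mem_T hc)
        · exact Y_mem_T hc
        · exact (T _ _ _ _).inv_mem
            (show (⟨0,0,1⟩ : Heis) ∈ _ from
              central_mem_T 1 (le_trans hc (le_max_right (w1 + w2) w3)))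
        · exact show (⟨0,0,1⟩ : Heis) ∈ _ from
            central_mem_T 1 (le_trans hc (le_max_right (w1 + w2) w3))
    | comm a b =>
        have himg : FC.image ![X,Y,Z] (FC.comm a b) =
            ⟨0, 0, (FC.image ![X,Y,Z] a).x * (FC.image ![X,Y,Z] b).y -
              (FC.image ![X,Y,Z] a).y * (FC.image ![X,Y,Z] b).x⟩ := comm_eq _ _
        rw [himg]
        by_cases hk : (FC.image ![X,Y,Z] a).x * (FC.image ![X,Y,Z] b).y -
              (FC.image ![X,Y,Z] a).y * (FC.image ![X,Y,Z] b).x = 0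
        · rw [hk]; exact (T _ _ _ _).one_mem
        · apply central_mem_T
          have key : (FC.image ![X,Y,Z] a).x * (FC.image ![X,Y,Z] b).y ≠ 0 ∨
              (FC.image ![X,Y,Z] a).y * (FC.image ![X,Y,Z] b).x ≠ 0 := by
            by_contra hcon
            push_neg at hcon
            exact hk (by rw [hcon.1, hcon.2, sub_zero])
          have hw : FC.weight ![w1,w2,w3] (FC.comm a b) = w1 + w2 := by
            show FC.weight ![w1,w2,w3] a + FC.weight ![w1,w2,w3] b = w1 + w2
            rcases key with hxy | hyx
            · obtain ⟨hax, hby⟩ := mul_ne_zero_iff.1 hxy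
              rw [image_x_ne hax, image_y_ne hby]
            · obtain ⟨hay, hbx⟩ := mul_ne_zero_iff.1 hyx
              rw [image_y_ne hay, image_x_ne hbx, add_comm]
          rw [hw] at hc
          exact le_trans hc (le_max_left _ _)
  · set W := weightSubgroup ![X, Y, Z] ![w1, w2, w3] t with hW
    have hX : t ≤ w1 → X ∈ W := fun h =>
      Subgroup.subset_closure ⟨FC.gen 0 true, h, rfl⟩
    have hY : t ≤ w2 → Y ∈ W := fun h =>
      Subgroup.subset_closure ⟨FC.gen 1 true, h, rfl⟩
    have hZ : t ≤ max (w1 + w2) w3 → Z ∈ W := by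
      intro h
      rcases le_max_iff.1 h with h' | h'
      · refine Subgroup.subset_closure ⟨FC.comm (FC.gen 0 true) (FC.gen 1 true), h', ?_⟩
        show ⁅X, Y⁆ = Z
        rw [comm_eq]; rfl
      · exact Subgroup.subset_closure ⟨FC.gen 2 true, h', rfl⟩
    unfold T; split_ifs with ha hb hc hd
    · intro g _
      rw [decomp g]
      have hz : t ≤ max (w1 + w2) w3 :=
        le_trans ha (le_trans (le_add_of_nonneg_right h2.le) (le_max_left _ _))
      exact mul_mem (mul_mem (zpow_mem (hX ha) _) (zpow_mem (hY hb) _)) (zpow_mem (hZ hz) _)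
    · intro g hg
      rw [decomp g, (mem_sXZ.1 hg : g.y = 0)]
      have hz : t ≤ max (w1 + w2) w3 :=
        le_trans ha (le_trans (le_add_of_nonneg_right h2.le) (le_max_left _ _))
      rw [zpow_zero, mul_one]
      exact mul_mem (zpow_mem (hX ha) _) (zpow_mem (hZ hz) _)
    · intro g hg
      rw [decomp g, (mem_sYZ.1 hg : g.x = 0)]
      have hz : t ≤ max (w1 + w2) w3 :=
        le_trans hc (le_trans (le_add_of_nonneg_left h1.le) (le_max_left _ _))
      rw [zpow_zero, one_mul]
      exact mul_mem (zpow_mem (hY hc) _) (zpow_mem (hZ hz) _)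
    · intro g hg
      obtain ⟨hgx, hgy⟩ := mem_sC.1 hg
      rw [decomp g, hgx, hgy]
      rw [zpow_zero, zpow_zero, one_mul, one_mul]
      exact zpow_mem (hZ hd) _
    · exact bot_le

end Char

section Rank

open Heis

lemma tfRank_eq {A B : Subgroup Heis} (r : ℕ) (f : Fin r → Heis) (hfA : ∀ i, f i ∈ A)
    (hind : ∀ x : Fin r → ℤ, (List.ofFn fun i => f i ^ x i).prod ∈ B → ∀ i, x i = 0)
    (hub : ∀ (n : ℕ) (g : Fin n → Heis), (∀ i, g i ∈ A) →
      (∀ x : Fin n → ℤ, (List.ofFn fun i => g i ^ x i).prod ∈ B → ∀ i, x i = 0) → n ≤ r) :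
    tfRank A B = r := by
  have hmem : r ∈ {n : ℕ | ∃ f : Fin n → Heis, (∀ i, f i ∈ A) ∧
      ∀ x : Fin n → ℤ, (List.ofFn (fun i => f i ^ x i)).prod ∈ B → ∀ i, x i = 0} :=
    ⟨f, hfA, hind⟩
  have hbdd : ∀ n ∈ {n : ℕ | ∃ f : Fin n → Heis, (∀ i, f i ∈ A) ∧
      ∀ x : Fin n → ℤ, (List.ofFn (fun i => f i ^ x i)).prod ∈ B → ∀ i, x i = 0}, n ≤ r := by
    rintro n ⟨g, hg, hg2⟩
    exact hub n g hg hg2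
  exact le_antisymm (csSup_le ⟨r, hmem⟩ hbdd) (le_csSup ⟨r, hbdd⟩ hmem)

lemma tfRank_self (A : Subgroup Heis) : tfRank A A = 0 := by
  apply tfRank_eq 0 (fun i => i.elim0) (fun i => i.elim0) (fun x _ i => i.elim0)
  intro n g hg hind
  by_contra hn
  have hpos : 0 < n := Nat.pos_of_ne_zero (fun h => hn (h ▸ Nat.le_refl 0))
  have h1 : (List.ofFn fun i : Fin n => g i ^ (1 : ℤ)).prod ∈ A := by
    apply Subgroup.list_prod_mem
    intro x hx
    rw [List.mem_ofFn] at hx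
    obtain ⟨i, rfl⟩ := hx
    simpa using hg i
  exact one_ne_zero (hind (fun _ => 1) h1 ⟨0, hpos⟩)

lemma card_le_of_indep_one {n : ℕ} (v : Fin n → ℤ)
    (h : ∀ g : Fin n → ℤ, (∑ i, g i * v i = 0) → ∀ i, g i = 0) : n ≤ 1 := by
  have hli : LinearIndependent ℤ v := by
    rw [Fintype.linearIndependent_iff]
    intro g hg
    exact h g (by simpa [smul_eq_mul] using hg)
  simpa using hli.fintype_card_le_finrank

lemma card_le_of_indep_two {n : ℕ} (v w : Fin n → ℤ)
    (h : ∀ g : Fin n → ℤ, (∑ i, g i * v i = 0) → (∑ i, g i * w i = 0) → ∀ i, g i = 0) :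
    n ≤ 2 := by
  have hli : LinearIndependent ℤ (fun i => (v i, w i) : Fin n → ℤ × ℤ) := by
    rw [Fintype.linearIndependent_iff]
    intro g hg
    rw [Prod.ext_iff] at hg
    have h1 : ∑ i, g i * v i = 0 := by
      have := hg.1
      simpa [Prod.fst_sum, smul_eq_mul] using this
    have h2 : ∑ i, g i * w i = 0 := by
      have := hg.2
      simpa [Prod.snd_sum, smul_eq_mul] using this
    exact h g h1 h2
  have := hli.fintype_card_le_finrank
  simpa [Module.finrank_prod] using this

lemma rank_top_sYZ : tfRank (⊤ : Subgroup Heis) sYZ = 1 := by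
  apply tfRank_eq 1 ![X] (fun _ => Subgroup.mem_top _)
  · intro x hx i
    have := mem_sYZ.1 hx
    rw [ofFn_prod_x] at this
    fin_cases i
    simpa [X] using this
  · intro n g _ hind
    apply card_le_of_indep_one (fun i => (g i).x)
    intro gc hsum
    exact hind gc (mem_sYZ.2 (by rw [ofFn_prod_x]; exact hsum))

lemma rank_top_sXZ : tfRank (⊤ : Subgroup Heis) sXZ = 1 := by
  apply tfRank_eq 1 ![Y] (fun _ => Subgroup.mem_top _)
  · intro x hx i
    have := mem_sXZ.1 hx
    rw [ofFn_prod_y] at this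
    fin_cases i
    simpa [Y] using this
  · intro n g _ hind
    apply card_le_of_indep_one (fun i => (g i).y)
    intro gc hsum
    exact hind gc (mem_sXZ.2 (by rw [ofFn_prod_y]; exact hsum))

lemma rank_top_sC : tfRank (⊤ : Subgroup Heis) sC = 2 := by
  apply tfRank_eq 2 ![X, Y] (fun _ => Subgroup.mem_top _)
  · intro x hx i
    obtain ⟨hx1, hx2⟩ := mem_sC.1 hx
    rw [ofFn_prod_x] at hx1
    rw [ofFn_prod_y] at hx2
    fin_cases i
    · simpa [X, Y, Fin.sum_univ_two] using hx1
    · simpa [X, Y, Fin.sum_univ_two] using hx2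
  · intro n g _ hind
    apply card_le_of_indep_two (fun i => (g i).x) (fun i => (g i).y)
    intro gc h1 h2
    exact hind gc (mem_sC.2 ⟨by rw [ofFn_prod_x]; exact h1, by rw [ofFn_prod_y]; exact h2⟩)

lemma rank_sXZ_sC : tfRank sXZ sC = 1 := by
  apply tfRank_eq 1 ![X] (fun i => by fin_cases i; exact mem_sXZ.2 rfl)
  · intro x hx i
    have := (mem_sC.1 hx).1
    rw [ofFn_prod_x] at this
    fin_cases i
    simpa [X] using this
  · intro n g hg hind
    apply card_le_of_indep_one (fun i => (g i).x)
    intro gc hsum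
    apply hind gc
    refine mem_sC.2 ⟨by rw [ofFn_prod_x]; exact hsum, ?_⟩
    rw [ofFn_prod_y]
    have : ∀ i, (g i).y = 0 := fun i => mem_sXZ.1 (hg i)
    simp [this]

lemma rank_sYZ_sC : tfRank sYZ sC = 1 := by
  apply tfRank_eq 1 ![Y] (fun i => by fin_cases i; exact mem_sYZ.2 rfl)
  · intro x hx i
    have := (mem_sC.1 hx).2
    rw [ofFn_prod_y] at this
    fin_cases i
    simpa [Y] using this
  · intro n g hg hind
    apply card_le_of_indep_one (fun i => (g i).y)
    intro gc hsum
    apply hind gc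
    refine mem_sC.2 ⟨?_, by rw [ofFn_prod_y]; exact hsum⟩
    rw [ofFn_prod_x]
    have : ∀ i, (g i).x = 0 := fun i => mem_sYZ.1 (hg i)
    simp [this]

lemma rank_sC_bot : tfRank sC (⊥ : Subgroup Heis) = 1 := by
  apply tfRank_eq 1 ![Z] (fun i => by fin_cases i; exact mem_sC.2 ⟨rfl, rfl⟩)
  · intro x hx i
    rw [Subgroup.mem_bot] at hx
    rw [ofFn_prod_central _ _ (fun i => by fin_cases i; exact ⟨rfl, rfl⟩)] at hx
    fin_cases i
    have := congrArg Heis.z hx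
    simpa [Z, one_def] using this
  · intro n g hg hind
    apply card_le_of_indep_one (fun i => (g i).z)
    intro gc hsum
    apply hind gc
    rw [Subgroup.mem_bot]
    rw [ofFn_prod_central _ _ (fun i => mem_sC.1 (hg i))]
    rw [hsum]
    rfl

end Rank

section Vals

open Heis

/-- letter counts of a formal commutator -/
def FC.count {k : ℕ} : FC k → Fin k → ℕ
  | .gen i _ => Pi.single i 1
  | .comm a b => FC.count a + FC.count b

lemma weight_count {k : ℕ} (w : Fin k → ℝ) :
    ∀ c : FC k, FC.weight w c = ∑ i, (FC.count c i : ℝ) * w i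
  | .gen j b => by
      simp only [FC.weight, FC.count, Pi.single_apply]
      have he : ∀ i : Fin k, ((if i = j then (1:ℕ) else 0 : ℕ) : ℝ) * w i
          = if i = j then w i else 0 := by
        intro i; split <;> simp
      rw [Finset.sum_congr rfl (fun i _ => he i)]
      simp
  | .comm a b => by
      simp only [FC.weight, FC.count, weight_count w a, weight_count w b, Pi.add_apply]
      rw [← Finset.sum_add_distrib]
      exact Finset.sum_congr rfl fun i _ => by push_cast; ring

lemma count_term_le {k : ℕ} {w : Fin k → ℝ} (hw : ∀ i, 0 < w i) (c : FC k) (i : Fin k) :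
    (FC.count c i : ℝ) * w i ≤ FC.weight w c := by
  rw [weight_count]
  exact Finset.single_le_sum (f := fun j => (FC.count c j : ℝ) * w j)
    (fun j _ => mul_nonneg (Nat.cast_nonneg _) (hw j).le) (Finset.mem_univ i)

variable {w1 w2 w3 : ℝ}

lemma w1_mem : w1 ∈ weightVals ![w1, w2, w3] := ⟨FC.gen 0 true, rfl⟩
lemma w2_mem : w2 ∈ weightVals ![w1, w2, w3] := ⟨FC.gen 1 true, rfl⟩
lemma w3_mem : w3 ∈ weightVals ![w1, w2, w3] := ⟨FC.gen 2 true, rfl⟩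
lemma w12_mem : w1 + w2 ∈ weightVals ![w1, w2, w3] :=
  ⟨FC.comm (FC.gen 0 true) (FC.gen 1 true), rfl⟩
lemma wz_mem : max (w1 + w2) w3 ∈ weightVals ![w1, w2, w3] := by
  rcases max_choice (w1 + w2) w3 with h | h <;> rw [h]
  exacts [w12_mem, w3_mem]

lemma exists_val_gt (h1 : 0 < w1) (t : ℝ) : ∃ x ∈ weightVals ![w1, w2, w3], t < x := by
  obtain ⟨n, hn⟩ := exists_nat_gt (t / w1)
  have ht : t < n * w1 := (div_lt_iff₀ h1).1 hn
  -- iterated commutator of weight (n+1) * w1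
  have key : ∀ m : ℕ, ∃ c : FC 3, FC.weight ![w1, w2, w3] c = ((m : ℝ) + 1) * w1 := by
    intro m
    induction m with
    | zero => exact ⟨FC.gen 0 true, by show w1 = _; norm_num⟩
    | succ p ih =>
        obtain ⟨c, hc⟩ := ih
        exact ⟨FC.comm (FC.gen 0 true) c, by
          show w1 + FC.weight ![w1,w2,w3] c = _
          rw [hc]; push_cast; ring⟩
  obtain ⟨c, hc⟩ := key n
  refine ⟨((n : ℝ) + 1) * w1, ⟨c, hc⟩, ?_⟩
  calc t < n * w1 := ht
    _ ≤ ((n : ℝ) + 1) * w1 := by nlinarith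

lemma nextVal_le (h1 : 0 < w1) (h2 : 0 < w2) (h3 : 0 < w3) {θ t : ℝ}
    (hθ : θ ∈ weightVals ![w1, w2, w3]) (ht : t < θ) :
    nextVal ![w1, w2, w3] t ≤ θ :=
  csInf_le ⟨t, fun x hx => hx.2.le⟩ ⟨hθ, ht⟩

lemma le_nextVal (h1 : 0 < w1) (t : ℝ) : t ≤ nextVal ![w1, w2, w3] t := by
  obtain ⟨x, hx, hxt⟩ := exists_val_gt (w2 := w2) (w3 := w3) h1 t
  exact le_csInf ⟨x, hx, hxt⟩ (fun y hy => hy.2.le)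

lemma lt_nextVal (h1 : 0 < w1) (h2 : 0 < w2) (h3 : 0 < w3) (t : ℝ) :
    t < nextVal ![w1, w2, w3] t := by
  have hwpos : ∀ i, 0 < (![w1, w2, w3] : Fin 3 → ℝ) i := by
    intro i; fin_cases i <;> assumption
  -- the set of values in (t, t+1] is finite
  set V := weightVals ![w1, w2, w3] with hV
  set F := {x ∈ V | t < x ∧ x ≤ t + 1} with hF
  have hm : 0 < min w1 (min w2 w3) := lt_min h1 (lt_min h2 h3)
  obtain ⟨M, hM⟩ := exists_nat_ge ((t + 1) / min w1 (min w2 w3))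
  have hFfin : F.Finite := by
    have himg : F ⊆ (fun n : Fin 3 → ℕ => ∑ i, (n i : ℝ) * ![w1, w2, w3] i) ''
        {n : Fin 3 → ℕ | ∀ i, n i ≤ M} := by
      rintro x ⟨⟨c, rfl⟩, hgt, hle⟩
      refine ⟨FC.count c, fun i => ?_, (weight_count _ c).symm⟩
      have hterm := count_term_le hwpos c i
      have hwi : min w1 (min w2 w3) ≤ ![w1, w2, w3] i := by
        fin_cases i
        · exact min_le_left _ _
        · exact le_trans (min_le_right _ _) (min_le_left _ _)
        · exact le_trans (min_le_right _ _) (min_le_right _ _)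
      have : (FC.count c i : ℝ) ≤ (t + 1) / min w1 (min w2 w3) := by
        rw [le_div_iff₀ hm]
        calc (FC.count c i : ℝ) * min w1 (min w2 w3)
            ≤ (FC.count c i : ℝ) * ![w1, w2, w3] i := by
              apply mul_le_mul_of_nonneg_left hwi (by positivity)
          _ ≤ FC.weight ![w1, w2, w3] c := hterm
          _ ≤ t + 1 := hle
      exact_mod_cast le_trans this hM
    have hfin2 : {n : Fin 3 → ℕ | ∀ i, n i ≤ M}.Finite := by
      have : {n : Fin 3 → ℕ | ∀ i, n i ≤ M} ⊆ Set.pi Set.univ (fun _ => Set.Iic M) := by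
        intro n hn i _; exact hn i
      exact (Set.Finite.pi (fun _ => Set.finite_Iic M)).subset this
    exact (hfin2.image _).subset himg
  have hSne : {x ∈ V | t < x}.Nonempty := by
    obtain ⟨x, hx, hxt⟩ := exists_val_gt (w2 := w2) (w3 := w3) h1 t
    exact ⟨x, hx, hxt⟩
  by_cases hFne : F.Nonempty
  · obtain ⟨b, hbF, hbmin⟩ := Set.exists_min_image F id hFfin hFne
    have hb : t < b := hbF.2.1
    have : b ≤ nextVal ![w1, w2, w3] t := by
      apply le_csInf hSne
      rintro x ⟨hxV, hxt⟩
      by_cases hx1 : x ≤ t + 1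
      · exact hbmin x ⟨hxV, hxt, hx1⟩
      · exact le_trans hbF.2.2 (le_of_not_ge hx1)
    linarith
  · have : t + 1 ≤ nextVal ![w1, w2, w3] t := by
      apply le_csInf hSne
      rintro x ⟨hxV, hxt⟩
      by_contra hx1
      exact hFne ⟨x, hxV, hxt, le_of_not_ge (fun h => hx1 h)⟩
    linarith

end Vals

section Main

open Heis

lemma T_congr {w1 w2 wz t s : ℝ} (h1 : t ≤ w1 ↔ s ≤ w1) (h2 : t ≤ w2 ↔ s ≤ w2)
    (h3 : t ≤ wz ↔ s ≤ wz) : T w1 w2 wz t = T w1 w2 wz s :=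
  if_congr h1 (if_congr h2 rfl rfl) (if_congr h2 rfl (if_congr h3 rfl rfl))

lemma T_eq_top {w1 w2 wz t : ℝ} (ha : t ≤ w1) (hb : t ≤ w2) : T w1 w2 wz t = ⊤ := by
  unfold T; rw [if_pos ha, if_pos hb]
lemma T_eq_sXZ {w1 w2 wz t : ℝ} (ha : t ≤ w1) (hb : ¬ t ≤ w2) : T w1 w2 wz t = sXZ := by
  unfold T; rw [if_pos ha, if_neg hb]
lemma T_eq_sYZ {w1 w2 wz t : ℝ} (ha : ¬ t ≤ w1) (hb : t ≤ w2) : T w1 w2 wz t = sYZ := by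
  unfold T; rw [if_neg ha, if_pos hb]
lemma T_eq_sC {w1 w2 wz t : ℝ} (ha : ¬ t ≤ w1) (hb : ¬ t ≤ w2) (hc : t ≤ wz) :
    T w1 w2 wz t = sC := by
  unfold T; rw [if_neg ha, if_neg hb, if_pos hc]
lemma T_eq_bot {w1 w2 wz t : ℝ} (ha : ¬ t ≤ w1) (hb : ¬ t ≤ w2) (hc : ¬ t ≤ wz) :
    T w1 w2 wz t = ⊥ := by
  unfold T; rw [if_neg ha, if_neg hb, if_neg hc]

lemma main_lemma (w1 w2 w3 : ℝ) (h1 : 0 < w1) (h2 : 0 < w2) (h3 : 0 < w3) :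
    Dval (![X, Y, Z] : Fin 3 → Heis) ![w1, w2, w3] = w1 + w2 + max (w1 + w2) w3 := by
  classical
  set wz := max (w1 + w2) w3 with hwz
  have hz1 : w1 < wz := lt_of_lt_of_le (lt_add_of_pos_right w1 h2) (le_max_left _ _)
  have hz2 : w2 < wz := lt_of_lt_of_le (lt_add_of_pos_left w2 h1) (le_max_left _ _)
  set V := weightVals ![w1, w2, w3] with hV
  have hm1 : w1 ∈ V := w1_mem
  have hm2 : w2 ∈ V := w2_mem
  have hmz : wz ∈ V := wz_mem
  -- the summand
  set f : V → ℝ := fun t => (t : ℝ) *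
    (tfRank (weightSubgroup ![X,Y,Z] ![w1,w2,w3] t)
      (weightSubgroup ![X,Y,Z] ![w1,w2,w3] (nextVal ![w1,w2,w3] t)) : ℝ) with hf
  have hDval : Dval (![X, Y, Z] : Fin 3 → Heis) ![w1, w2, w3] = ∑' t : V, f t := rfl
  -- vanishing away from the three thresholds
  have hzero : ∀ t : V, (t : ℝ) ≠ w1 → (t : ℝ) ≠ w2 → (t : ℝ) ≠ wz → f t = 0 := by
    rintro ⟨t, ht⟩ ha hb hc
    simp only at ha hb hc
    have key : weightSubgroup ![X,Y,Z] ![w1,w2,w3] t =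
        weightSubgroup ![X,Y,Z] ![w1,w2,w3] (nextVal ![w1,w2,w3] t) := by
      rw [wsub_eq h1 h2 h3, wsub_eq h1 h2 h3, ← hwz]
      have trans : ∀ θ : ℝ, θ ∈ V → t ≠ θ → (t ≤ θ ↔ nextVal ![w1,w2,w3] t ≤ θ) := by
        intro θ hθ hne
        rcases lt_or_gt_of_ne hne with hlt | hgt
        · exact ⟨fun _ => nextVal_le h1 h2 h3 hθ hlt, fun _ => hlt.le⟩
        · constructor
          · intro h; exact absurd h (not_le.2 hgt)
          · intro h; exact absurd (lt_of_lt_of_le hgt (le_nextVal (w2 := w2) (w3 := w3) h1 t))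
              (not_lt.2 h)
      exact T_congr (trans w1 hm1 ha) (trans w2 hm2 hb) (trans wz hmz hc)
    show (t : ℝ) * _ = 0
    rw [key, tfRank_self]
    simp
  -- value at wz
  have hfz : f ⟨wz, hmz⟩ = wz := by
    show (wz : ℝ) * _ = wz
    have hN := lt_nextVal (w2 := w2) (w3 := w3) h1 h2 h3 wz
    rw [wsub_eq h1 h2 h3, wsub_eq h1 h2 h3, ← hwz,
      T_eq_sC (not_le.2 hz1) (not_le.2 hz2) le_rfl,
      T_eq_bot (not_le.2 (lt_trans hz1 hN)) (not_le.2 (lt_trans hz2 hN)) (not_le.2 hN),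
      rank_sC_bot]
    simp
  by_cases hEq : w1 = w2
  · -- two distinct values: w1 (rank 2) and wz
    have he13 : (⟨w1, hm1⟩ : V) ≠ ⟨wz, hmz⟩ := by
      intro h; exact absurd (congrArg Subtype.val h) (ne_of_lt hz1)
    have hsum : ∑' t : V, f t = f ⟨w1, hm1⟩ + f ⟨wz, hmz⟩ := by
      rw [tsum_eq_sum (s := {⟨w1, hm1⟩, ⟨wz, hmz⟩})]
      · rw [Finset.sum_pair he13]
      · rintro ⟨t, ht⟩ hts
        simp only [Finset.mem_insert, Finset.mem_singleton] at hts
        push_neg at hts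
        refine hzero ⟨t, ht⟩ ?_ ?_ ?_
        · exact fun h => hts.1 (Subtype.ext h)
        · exact fun h => hts.1 (Subtype.ext (h.trans hEq.symm))
        · exact fun h => hts.2 (Subtype.ext h)
    have hf1 : f ⟨w1, hm1⟩ = 2 * w1 := by
      show (w1 : ℝ) * _ = 2 * w1
      have hN := lt_nextVal (w2 := w2) (w3 := w3) h1 h2 h3 w1
      have hNz : nextVal ![w1,w2,w3] w1 ≤ wz := nextVal_le h1 h2 h3 hmz hz1
      rw [wsub_eq h1 h2 h3, wsub_eq h1 h2 h3, ← hwz,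
        T_eq_top le_rfl (le_of_eq hEq),
        T_eq_sC (not_le.2 hN) (not_le.2 (hEq ▸ hN)) hNz, rank_top_sC]
      norm_num [mul_comm]
    rw [hDval, hsum, hf1, hfz]
    linarith [hEq]
  · -- three distinct values
    have he12 : (⟨w1, hm1⟩ : V) ≠ ⟨w2, hm2⟩ := fun h => hEq (congrArg Subtype.val h)
    have he13 : (⟨w1, hm1⟩ : V) ≠ ⟨wz, hmz⟩ := by
      intro h; exact absurd (congrArg Subtype.val h) (ne_of_lt hz1)
    have he23 : (⟨w2, hm2⟩ : V) ≠ ⟨wz, hmz⟩ := by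
      intro h; exact absurd (congrArg Subtype.val h) (ne_of_lt hz2)
    have hsum : ∑' t : V, f t = f ⟨w1, hm1⟩ + (f ⟨w2, hm2⟩ + f ⟨wz, hmz⟩) := by
      rw [tsum_eq_sum (s := {⟨w1, hm1⟩, ⟨w2, hm2⟩, ⟨wz, hmz⟩})]
      · rw [Finset.sum_insert (by simp [he12, he13]),
          Finset.sum_pair he23]
      · rintro ⟨t, ht⟩ hts
        simp only [Finset.mem_insert, Finset.mem_singleton] at hts
        push_neg at hts
        exact hzero ⟨t, ht⟩ (fun h => hts.1 (Subtype.ext h))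
          (fun h => hts.2.1 (Subtype.ext h)) (fun h => hts.2.2 (Subtype.ext h))
    have hN1 := lt_nextVal (w2 := w2) (w3 := w3) h1 h2 h3 w1
    have hN2 := lt_nextVal (w2 := w2) (w3 := w3) h1 h2 h3 w2
    have hN1z : nextVal ![w1,w2,w3] w1 ≤ wz := nextVal_le h1 h2 h3 hmz hz1
    have hN2z : nextVal ![w1,w2,w3] w2 ≤ wz := nextVal_le h1 h2 h3 hmz hz2
    rcases lt_or_gt_of_ne hEq with hlt | hgt
    · have hf1 : f ⟨w1, hm1⟩ = w1 := by
        show (w1 : ℝ) * _ = w1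
        have hN12 : nextVal ![w1,w2,w3] w1 ≤ w2 := nextVal_le h1 h2 h3 hm2 hlt
        rw [wsub_eq h1 h2 h3, wsub_eq h1 h2 h3, ← hwz,
          T_eq_top le_rfl hlt.le, T_eq_sYZ (not_le.2 hN1) hN12, rank_top_sYZ]
        simp
      have hf2 : f ⟨w2, hm2⟩ = w2 := by
        show (w2 : ℝ) * _ = w2
        rw [wsub_eq h1 h2 h3, wsub_eq h1 h2 h3, ← hwz,
          T_eq_sYZ (not_le.2 hlt) le_rfl,
          T_eq_sC (not_le.2 (lt_trans hlt hN2)) (not_le.2 hN2) hN2z, rank_sYZ_sC]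
        simp
      rw [hDval, hsum, hf1, hf2, hfz]
      ring
    · have hf2 : f ⟨w2, hm2⟩ = w2 := by
        show (w2 : ℝ) * _ = w2
        have hN21 : nextVal ![w1,w2,w3] w2 ≤ w1 := nextVal_le h1 h2 h3 hm1 hgt
        rw [wsub_eq h1 h2 h3, wsub_eq h1 h2 h3, ← hwz,
          T_eq_top hgt.le le_rfl, T_eq_sXZ hN21 (not_le.2 hN2), rank_top_sXZ]
        simp
      have hf1 : f ⟨w1, hm1⟩ = w1 := by
        show (w1 : ℝ) * _ = w1
        rw [wsub_eq h1 h2 h3, wsub_eq h1 h2 h3, ← hwz,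
          T_eq_sXZ le_rfl (not_le.2 hgt),
          T_eq_sC (not_le.2 hN1) (not_le.2 (lt_trans hgt hN1)) hN1z, rank_sXZ_sC]
        simp
      rw [hDval, hsum, hf1, hf2, hfz]
      ring

end Main

open Heis in
/-- The discrete Heisenberg group with generating triple
`S = (X, Y, Z)`, parameters `α₁, α₂, α₃ ∈ (0,2)` and weights `w_i = 1/α_i`:
`D(S,𝔴) = 1/α₁ + 1/α₂ + max{1/α₁ + 1/α₂, 1/α₃}`. -/
theorem statement18 (α₁ α₂ α₃ : ℝ)
    (h₁ : 0 < α₁) (h₁' : α₁ < 2) (h₂ : 0 < α₂) (h₂' : α₂ < 2)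
    (h₃ : 0 < α₃) (h₃' : α₃ < 2) :
    Dval (![X, Y, Z] : Fin 3 → Heis) ![1/α₁, 1/α₂, 1/α₃] =
      1/α₁ + 1/α₂ + max (1/α₁ + 1/α₂) (1/α₃) := by
  exact main_lemma _ _ _ (by positivity) (by positivity) (by positivity)
end
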